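/- Let ϑ_P be a primitive random substitution with substitution matrix M, Perron–Frobenius eigenvalue λ and right Perron–Frobenius eigenvector R. Then for every n, k ∈ N, H_{n+k}^T ≤ H_n^T M^k + H_k^T entrywise; in particular H_{n+k}^T R ≤ λ^k·H_n^T R + H_k^T R. If ϑ_P has unique realisation paths, then equality occurs precisely if, for every a ∈ A, the random word ϑ_P^n(a) is completely determined by ϑ_P^{n+k}(a). -/

import Mathlib

open Filter MeasureTheory

namespace RandomSubstitutionTheory

variable {A : Type*} [Fintype A] [DecidableEq A]

/-- The set of realisations of `ϑ(u)` for a word `u`. -/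
def reals (θ : A → Finset (List A)) : List A → Finset (List A)
  | [] => {[]}
  | a :: u => (θ a).biUnion fun v => (reals θ u).image fun w => v ++ w

/-- The set of realisations of `ϑ^n(u)` for a word `u`. -/
def realsIter (θ : A → Finset (List A)) : ℕ → List A → Finset (List A)
  | 0, u => {u}
  | n + 1, u => (reals θ u).biUnion fun v => realsIter θ n v

/-- `wordProb θ P u w` is the probability `P[ϑ_P(u) = w]`, each letter of `u` being
substituted independently. -/
noncomputable def wordProb (θ : A → Finset (List A)) (P : A → List A → ℝ) :
    List A → List A → ℝ
  | [], w => if w = [] then 1 else 0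
  | a :: u, w =>
      ∑ v ∈ θ a, P a v * (if v <+: w then wordProb θ P u (w.drop v.length) else 0)

/-- `iterProb θ P n u w` is the probability `P[ϑ_P^n(u) = w]` of the induced Markov chain. -/
noncomputable def iterProb (θ : A → Finset (List A)) (P : A → List A → ℝ) :
    ℕ → List A → List A → ℝ
  | 0, u, w => if u = w then 1 else 0
  | n + 1, u, w => ∑ v ∈ reals θ u, wordProb θ P u v * iterProb θ P n v w

/-- The substitution matrix `M_{ij} = E[|ϑ_P(a_j)|_{a_i}]`. -/
noncomputable def substM (θ : A → Finset (List A)) (P : A → List A → ℝ) :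
    Matrix A A ℝ :=
  Matrix.of fun i j => ∑ w ∈ θ j, P j w * (w.count i : ℝ)

/-- The defining data of a random substitution: nonempty finite sets of nonempty words
and strictly positive probability vectors. -/
def IsRandomSubstitution (θ : A → Finset (List A)) (P : A → List A → ℝ) : Prop :=
  (∀ a, (θ a).Nonempty) ∧ (∀ a, ∀ w ∈ θ a, w ≠ []) ∧
    (∀ a, ∀ w ∈ θ a, 0 < P a w) ∧ (∀ a w, w ∉ θ a → P a w = 0) ∧
    ∀ a, ∑ w ∈ θ a, P a w = 1

/-- Primitivity of the substitution matrix: some power has strictly positive entries. -/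
def IsPrimitive (θ : A → Finset (List A)) (P : A → List A → ℝ) : Prop :=
  ∃ k : ℕ, ∀ i j : A, 0 < (substM θ P ^ k) i j

/-- The Perron–Frobenius eigenvalue is `> 1` (witnessed by a positive right eigenvector). -/
def IsExpanding (θ : A → Finset (List A)) (P : A → List A → ℝ) : Prop :=
  ∃ lam : ℝ, 1 < lam ∧ ∃ R : A → ℝ, (∀ a, 0 < R a) ∧ (substM θ P).mulVec R = lam • R

/-- A word is legal if it occurs as a subword of some level-`k` inflation word. -/
def Legal (θ : A → Finset (List A)) (u : List A) : Prop :=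
  ∃ (a : A) (k : ℕ) (w : List A), w ∈ realsIter θ k [a] ∧ u <:+: w

/-- All words of length `n` over the alphabet. -/
def allWords (A : Type*) [Fintype A] [DecidableEq A] (n : ℕ) : Finset (List A) :=
  (Finset.univ : Finset (Fin n → A)).image List.ofFn

/-- All legal words of length `n`. -/
noncomputable def legalWords (θ : A → Finset (List A)) (n : ℕ) : Finset (List A) :=
  letI := Classical.decPred (Legal θ)
  (allWords A n).filter (Legal θ)

/-- The left shift on bi-infinite sequences. -/
def shift : (ℤ → A) → ℤ → A := fun x i => x (i + 1)

/-- The finite word of length `n` read off a bi-infinite sequence starting at position `m`. -/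
def window (x : ℤ → A) (m : ℤ) (n : ℕ) : List A :=
  (List.range n).map fun t => x (m + (t : ℤ))

/-- The random substitution subshift `X_ϑ`. -/
def Xtheta (θ : A → Finset (List A)) : Set (ℤ → A) :=
  {x | ∀ (m : ℤ) (n : ℕ), Legal θ (window x m n)}

/-- The cylinder set of the word `v` at position `m`. -/
def cylinder (v : List A) (m : ℤ) : Set (ℤ → A) :=
  {x | window x m v.length = v}

/-- The number `|w|_v` of (possibly overlapping) occurrences of `v` in `w`. -/
def occCount (v w : List A) : ℕ :=
  ((List.range w.length).filter fun i => decide (v <+: w.drop i)).length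

/-- Expected length `E[|ϑ_P^k(a)|]`. -/
noncomputable def expLen (θ : A → Finset (List A)) (P : A → List A → ℝ)
    (k : ℕ) (a : A) : ℝ :=
  ∑ w ∈ realsIter θ k [a], iterProb θ P k [a] w * (w.length : ℝ)

/-- Expected number of occurrences `E[|ϑ_P^k(a)|_v]`. -/
noncomputable def expCount (θ : A → Finset (List A)) (P : A → List A → ℝ)
    (k : ℕ) (a : A) (v : List A) : ℝ :=
  ∑ w ∈ realsIter θ k [a], iterProb θ P k [a] w * (occCount v w : ℝ)

/-- `μ` is the frequency measure of `(ϑ, P)`: a shift-invariant Borel probability measure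
supported on `X_ϑ` whose cylinder values are the expected word frequencies. -/
def IsFrequencyMeasure [MeasurableSpace A] (θ : A → Finset (List A))
    (P : A → List A → ℝ) (μ : Measure (ℤ → A)) : Prop :=
  IsProbabilityMeasure μ ∧
    (∀ s : Set (ℤ → A), MeasurableSet s → μ (shift ⁻¹' s) = μ s) ∧
    μ (Xtheta θ) = 1 ∧
    ∀ v : List A, Legal θ v → ∀ (m : ℤ) (a : A),
      Tendsto (fun k : ℕ => expCount θ P k a v / expLen θ P k a) atTop
        (nhds ((μ (cylinder v m)).toReal))

/-- The `n`-th entropy sum `∑_{u ∈ L_ϑ^n} -μ[u] log μ[u]`. -/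
noncomputable def entropySeq [MeasurableSpace A] (θ : A → Finset (List A))
    (μ : Measure (ℤ → A)) (n : ℕ) : ℝ :=
  ∑ u ∈ legalWords θ n, Real.negMulLog ((μ (cylinder u 0)).toReal)

/-- The measure-theoretic (Kolmogorov–Sinai) entropy of the shift with respect to `μ`,
computed along cylinder partitions. -/
noncomputable def measEntropy [MeasurableSpace A] (θ : A → Finset (List A))
    (μ : Measure (ℤ → A)) : ℝ :=
  limsup (fun n : ℕ => entropySeq θ μ n / (n : ℝ)) atTop

/-- The topological entropy of the subshift `X_ϑ`. -/
noncomputable def topEntropy (θ : A → Finset (List A)) : ℝ :=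
  limsup (fun n : ℕ => Real.log ((legalWords θ n).card) / (n : ℝ)) atTop

/-- The entropy vector `H_{k,a} = H(ϑ_P^k(a))`. -/
noncomputable def Hvec (θ : A → Finset (List A)) (P : A → List A → ℝ)
    (k : ℕ) (a : A) : ℝ :=
  ∑ w ∈ realsIter θ k [a], Real.negMulLog (iterProb θ P k [a] w)

/-- The inner product `H_k^T R`. -/
noncomputable def HdotR (θ : A → Finset (List A)) (P : A → List A → ℝ)
    (R : A → ℝ) (k : ℕ) : ℝ :=
  ∑ a, Hvec θ P k a * R a

/-- Binary entropy `H(p) = -p log p - (1-p) log (1-p)`. -/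
noncomputable def binEnt (p : ℝ) : ℝ := Real.negMulLog p + Real.negMulLog (1 - p)

/-- Unique realisation paths: concatenation of level-`k` inflation words of the letters of a
legal word is injective. -/
def UniqueRealisationPaths (θ : A → Finset (List A)) : Prop :=
  ∀ v : List A, Legal θ v → ∀ k : ℕ, ∀ f g : Fin v.length → List A,
    (∀ i, f i ∈ realsIter θ k [v.get i]) → (∀ i, g i ∈ realsIter θ k [v.get i]) →
      (List.ofFn f).flatten = (List.ofFn g).flatten → f = g

/-- The disjoint set condition. -/
def DisjointSetCondition (θ : A → Finset (List A)) : Prop :=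
  ∀ (a : A) (k : ℕ), ∀ u ∈ θ a, ∀ v ∈ θ a, u ≠ v →
    ∀ w, w ∈ realsIter θ k u → w ∉ realsIter θ k v

/-- The identical set condition. -/
def IdenticalSetCondition (θ : A → Finset (List A)) : Prop :=
  ∀ (a : A) (k : ℕ), ∀ u ∈ θ a, ∀ v ∈ θ a, realsIter θ k u = realsIter θ k v

/-- Identical production probabilities. -/
def IdenticalProductionProbabilities (θ : A → Finset (List A))
    (P : A → List A → ℝ) : Prop :=
  ∀ a : A, ∀ u ∈ θ a, ∀ v ∈ θ a, ∀ (k : ℕ) (w : List A),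
    iterProb θ P k u w = iterProb θ P k v w

/-- The disjoint set condition for the `k`-th power `ϑ^k`. -/
def DisjointSetConditionPow (θ : A → Finset (List A)) (k : ℕ) : Prop :=
  ∀ (a : A) (j : ℕ), ∀ u ∈ realsIter θ k [a], ∀ v ∈ realsIter θ k [a], u ≠ v →
    ∀ w, w ∈ realsIter θ (k * j) u → w ∉ realsIter θ (k * j) v

/-- The identical set condition for the `k`-th power `ϑ^k`. -/
def IdenticalSetConditionPow (θ : A → Finset (List A)) (k : ℕ) : Prop :=
  ∀ (a : A) (j : ℕ), ∀ u ∈ realsIter θ k [a], ∀ v ∈ realsIter θ k [a],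
    realsIter θ (k * j) u = realsIter θ (k * j) v

/-- Identical production probabilities for the `k`-th power `ϑ^k`. -/
def IdenticalProductionProbabilitiesPow (θ : A → Finset (List A))
    (P : A → List A → ℝ) (k : ℕ) : Prop :=
  ∀ a : A, ∀ u ∈ realsIter θ k [a], ∀ v ∈ realsIter θ k [a], ∀ (j : ℕ) (w : List A),
    iterProb θ P (k * j) u w = iterProb θ P (k * j) v w

/-- Compatibility: all realisations of a letter have the same abelianisation. -/
def Compatible (θ : A → Finset (List A)) : Prop :=
  ∀ a : A, ∀ u ∈ θ a, ∀ v ∈ θ a, ∀ b : A, u.count b = v.count b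

/-- Constant length `ℓ ≥ 2`. -/
def ConstantLength (θ : A → Finset (List A)) (ℓ : ℕ) : Prop :=
  2 ≤ ℓ ∧ ∀ a : A, ∀ w ∈ θ a, w.length = ℓ

/-- The set `ϑ(y)` of bi-infinite sequences obtained by substituting each letter of `y`,
with the image of `y 0` beginning at position `0`. -/
def substSeq (θ : A → Finset (List A)) (y : ℤ → A) : Set (ℤ → A) :=
  {x | ∃ v : ℤ → List A, (∀ j, v j ∈ θ (y j)) ∧
    ∃ p : ℤ → ℤ, p 0 = 0 ∧ (∀ j, p (j + 1) = p j + (v j).length) ∧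
      ∀ (j : ℤ) (t : ℕ) (ht : t < (v j).length), x (p j + (t : ℤ)) = (v j).get ⟨t, ht⟩}

/-- `ϑ(X)` for a set of bi-infinite sequences. -/
def substImage (θ : A → Finset (List A)) (X : Set (ℤ → A)) : Set (ℤ → A) :=
  ⋃ y ∈ X, substSeq θ y

/-- The set `ϑ^m(y)` of bi-infinite sequences. -/
def substSeqPow (θ : A → Finset (List A)) : ℕ → (ℤ → A) → Set (ℤ → A)
  | 0, y => {y}
  | m + 1, y => ⋃ z ∈ substSeq θ y, substSeqPow θ m z

/-- The maximal length of an inflation word of the letter `a` (equals the common length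
when lengths are well-defined). -/
def maxLen (θ : A → Finset (List A)) (a : A) : ℕ := (θ a).sup List.length

/-- Recognisability: every `x ∈ X_ϑ` has a unique inflation-word decomposition. -/
def Recognisable (θ : A → Finset (List A)) : Prop :=
  ∀ x ∈ Xtheta θ, ∃! p : (ℤ → A) × ℕ,
    p.1 ∈ Xtheta θ ∧ p.2 < maxLen θ (p.1 0) ∧
      (fun i => x (i - (p.2 : ℤ))) ∈ substSeq θ p.1

/-- Recognisability of the `m`-th power of a constant length-`ℓ` substitution. -/
def RecognisablePow (θ : A → Finset (List A)) (m ℓ : ℕ) : Prop :=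
  ∀ x ∈ Xtheta θ, ∃! p : (ℤ → A) × ℕ,
    p.1 ∈ Xtheta θ ∧ p.2 < ℓ ^ m ∧
      (fun i => x (i - (p.2 : ℤ))) ∈ substSeqPow θ m p.1

/-- The set `ϑ^m([a])` of exact images of sequences in the cylinder `[a] ⊆ X_ϑ`. -/
def inflCylPow (θ : A → Finset (List A)) (m : ℕ) (a : A) : Set (ℤ → A) :=
  ⋃ y ∈ {w ∈ Xtheta θ | w 0 = a}, substSeqPow θ m y

/-- `r` is a radius of local recognisability for `ϑ^m`. -/
def RecogPropPow (θ : A → Finset (List A)) (m r : ℕ) : Prop :=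
  ∀ (a : A) (x : ℤ → A), x ∈ inflCylPow θ m a → ∀ y ∈ Xtheta θ,
    (∀ t : ℤ, -(r : ℤ) ≤ t → t ≤ (r : ℤ) → x t = y t) → y ∈ inflCylPow θ m a

/-- The recognisability radius `κ(ϑ^m)`. -/
noncomputable def recogRadiusPow (θ : A → Finset (List A)) (m : ℕ) : ℕ :=
  sInf {r | RecogPropPow θ m r}

/-- The recognisability radius `κ(ϑ)`. -/
noncomputable def recogRadius (θ : A → Finset (List A)) : ℕ := recogRadiusPow θ 1

/-- The random word `ϑ_P^n(a)` is (a.s.) completely determined by `ϑ_P^{n+k}(a)`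
in the Markov chain. -/
def DeterminedBy (θ : A → Finset (List A)) (P : A → List A → ℝ)
    (a : A) (n k : ℕ) : Prop :=
  ∀ v₁ v₂ w : List A, v₁ ∈ realsIter θ n [a] → v₂ ∈ realsIter θ n [a] →
    0 < iterProb θ P n [a] v₁ * iterProb θ P k v₁ w →
      0 < iterProb θ P n [a] v₂ * iterProb θ P k v₂ w → v₁ = v₂

/-- The random words `ϑ_P^n(a)` and `ϑ_P^{n+k}(a)` are independent in the Markov chain. -/
def IndepSteps (θ : A → Finset (List A)) (P : A → List A → ℝ)
    (a : A) (n k : ℕ) : Prop :=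
  ∀ v w : List A,
    iterProb θ P n [a] v * iterProb θ P k v w =
      iterProb θ P n [a] v * iterProb θ P (n + k) [a] w

/-- The substitution matrix of a marginal (deterministic) substitution. -/
def marginalM (ρ : A → List A) : Matrix A A ℝ :=
  Matrix.of fun i j => ((ρ j).count i : ℝ)

/-- Geometric compatibility: a single positive left eigenvector with eigenvalue `λ > 1`
for all marginals. -/
def GeometricallyCompatible (θ : A → Finset (List A)) : Prop :=
  ∃ lam : ℝ, 1 < lam ∧ ∃ L : A → ℝ, (∀ a, 0 < L a) ∧
    ∀ ρ : A → List A, (∀ a, ρ a ∈ θ a) → Matrix.vecMul L (marginalM ρ) = lam • L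

/-! ### Phase 1: support structure -/

set_option linter.unusedSectionVars false

variable {θ : A → Finset (List A)} {P : A → List A → ℝ}

lemma mem_reals_nil {x : List A} : x ∈ reals θ [] ↔ x = [] := by simp [reals]

lemma mem_reals_cons {a : A} {u x : List A} :
    x ∈ reals θ (a :: u) ↔ ∃ v ∈ θ a, ∃ w ∈ reals θ u, x = v ++ w := by
  simp [reals, eq_comm]

lemma realsIter_zero (u : List A) : realsIter θ 0 u = {u} := rfl

lemma realsIter_succ (n : ℕ) (u : List A) :
    realsIter θ (n + 1) u = (reals θ u).biUnion (realsIter θ n) := rfl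

lemma mem_realsIter_one {u x : List A} : x ∈ realsIter θ 1 u ↔ x ∈ reals θ u := by
  simp [realsIter]

lemma mem_reals_append {u u' x : List A} :
    x ∈ reals θ (u ++ u') ↔ ∃ s ∈ reals θ u, ∃ t ∈ reals θ u', x = s ++ t := by
  induction u generalizing x with
  | nil => simp [mem_reals_nil]
  | cons a u ih =>
      constructor
      · intro hx
        rw [List.cons_append, mem_reals_cons] at hx
        rcases hx with ⟨v, hv, w, hw, rfl⟩
        rcases ih.1 hw with ⟨s, hs, t, ht, rfl⟩
        exact ⟨v ++ s, mem_reals_cons.2 ⟨v, hv, s, hs, rfl⟩, t, ht, by simp⟩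
      · rintro ⟨s', hs', t, ht, rfl⟩
        rcases mem_reals_cons.1 hs' with ⟨v, hv, s, hs, rfl⟩
        rw [List.cons_append, mem_reals_cons]
        exact ⟨v, hv, s ++ t, ih.2 ⟨s, hs, t, ht, rfl⟩, by simp⟩

lemma mem_realsIter_add {m j : ℕ} {u x : List A} :
    x ∈ realsIter θ (m + j) u ↔ ∃ v ∈ realsIter θ m u, x ∈ realsIter θ j v := by
  induction m generalizing u with
  | zero => simp [realsIter_zero]
  | succ m ih =>
      have : m + 1 + j = (m + j) + 1 := by omega
      rw [this, realsIter_succ, realsIter_succ]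
      simp only [Finset.mem_biUnion]
      constructor
      · rintro ⟨y, hy, hx⟩
        rcases ih.1 hx with ⟨v, hv, hx⟩
        exact ⟨v, ⟨y, hy, hv⟩, hx⟩
      · rintro ⟨v, ⟨y, hy, hv⟩, hx⟩
        exact ⟨y, hy, ih.2 ⟨v, hv, hx⟩⟩

lemma mem_realsIter_comp {m j : ℕ} {u v w : List A}
    (hv : v ∈ realsIter θ m u) (hw : w ∈ realsIter θ j v) :
    w ∈ realsIter θ (m + j) u :=
  mem_realsIter_add.2 ⟨v, hv, hw⟩

lemma realsIter_nil (k : ℕ) : realsIter θ k ([] : List A) = {[]} := by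
  induction k with
  | zero => rfl
  | succ k ih => rw [realsIter_succ]; simp [reals, ih]

lemma mem_realsIter_append {k : ℕ} {u u' x : List A} :
    x ∈ realsIter θ k (u ++ u') ↔
      ∃ s ∈ realsIter θ k u, ∃ t ∈ realsIter θ k u', x = s ++ t := by
  induction k generalizing u u' x with
  | zero => simp [realsIter_zero]
  | succ k ih =>
      rw [realsIter_succ]
      simp only [Finset.mem_biUnion]
      constructor
      · rintro ⟨y, hy, hx⟩
        rcases mem_reals_append.1 hy with ⟨c, hc, d, hd, rfl⟩
        rcases ih.1 hx with ⟨s, hs, t, ht, rfl⟩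
        exact ⟨s, Finset.mem_biUnion.2 ⟨c, hc, hs⟩, t, Finset.mem_biUnion.2 ⟨d, hd, ht⟩, rfl⟩
      · rintro ⟨s, hs, t, ht, rfl⟩
        rw [realsIter_succ, Finset.mem_biUnion] at hs ht
        rcases hs with ⟨c, hc, hs⟩
        rcases ht with ⟨d, hd, ht⟩
        exact ⟨c ++ d, mem_reals_append.2 ⟨c, hc, d, hd, rfl⟩, ih.2 ⟨s, hs, t, ht, rfl⟩⟩

lemma reals_nonempty (hθ : ∀ a, (θ a).Nonempty) (u : List A) : (reals θ u).Nonempty := by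
  induction u with
  | nil => exact ⟨[], by simp [reals]⟩
  | cons a u ih =>
      rcases hθ a with ⟨v, hv⟩
      rcases ih with ⟨w, hw⟩
      exact ⟨v ++ w, mem_reals_cons.2 ⟨v, hv, w, hw, rfl⟩⟩

lemma realsIter_nonempty (hθ : ∀ a, (θ a).Nonempty) (k : ℕ) (u : List A) :
    (realsIter θ k u).Nonempty := by
  induction k generalizing u with
  | zero => exact ⟨u, by simp [realsIter_zero]⟩
  | succ k ih =>
      rcases reals_nonempty hθ u with ⟨v, hv⟩
      rcases ih v with ⟨w, hw⟩
      exact ⟨w, (realsIter_succ k u) ▸ Finset.mem_biUnion.2 ⟨v, hv, hw⟩⟩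

lemma mem_realsIter_flatten {k : ℕ} {l : List (List A)} {w : List A} :
    w ∈ realsIter θ k l.flatten ↔
      ∃ ws : List (List A), List.Forall₂ (fun x y => y ∈ realsIter θ k x) l ws ∧
        w = ws.flatten := by
  induction l generalizing w with
  | nil =>
      simp only [List.flatten_nil, realsIter_nil, Finset.mem_singleton]
      constructor
      · rintro rfl; exact ⟨[], List.Forall₂.nil, rfl⟩
      · rintro ⟨ws, hws, rfl⟩
        cases hws; rfl
  | cons x l ih =>
      rw [List.flatten_cons, mem_realsIter_append]
      constructor
      · rintro ⟨s, hs, t, ht, rfl⟩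
        rcases ih.1 ht with ⟨ws, hws, rfl⟩
        exact ⟨s :: ws, List.Forall₂.cons hs hws, rfl⟩
      · rintro ⟨ws, hws, rfl⟩
        rcases hws with _ | ⟨hs, hws⟩
        exact ⟨_, hs, _, ih.2 ⟨_, hws, rfl⟩, rfl⟩

lemma mem_realsIter_letters {k : ℕ} {u x : List A} :
    x ∈ realsIter θ k u ↔
      ∃ ws : List (List A), List.Forall₂ (fun c y => y ∈ realsIter θ k [c]) u ws ∧
        x = ws.flatten := by
  induction u generalizing x with
  | nil =>
      simp only [realsIter_nil, Finset.mem_singleton]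
      constructor
      · rintro rfl; exact ⟨[], List.Forall₂.nil, rfl⟩
      · rintro ⟨ws, hws, rfl⟩
        cases hws; rfl
  | cons a u ih =>
      have : a :: u = [a] ++ u := rfl
      rw [this, mem_realsIter_append]
      constructor
      · rintro ⟨s, hs, t, ht, rfl⟩
        rcases ih.1 ht with ⟨ws, hws, rfl⟩
        exact ⟨s :: ws, List.Forall₂.cons hs hws, rfl⟩
      · rintro ⟨ws, hws, rfl⟩
        rcases hws with _ | ⟨hs, hws⟩
        exact ⟨_, hs, _, ih.2 ⟨_, hws, rfl⟩, rfl⟩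

lemma legal_of_mem_realsIter {k : ℕ} {a : A} {v : List A}
    (h : v ∈ realsIter θ k [a]) : Legal θ v :=
  ⟨a, k, v, h, List.infix_refl v⟩

lemma Legal.infix {u v : List A} (hv : Legal θ v) (hu : u <:+: v) : Legal θ u := by
  rcases hv with ⟨a, k, w, hw, hvw⟩
  exact ⟨a, k, w, hw, hu.trans hvw⟩

/-! ### Phase 2: probability lemmas -/

lemma sum_ite_eq_of_mem {ι β : Type*} [DecidableEq ι] [AddCommMonoid β] {s : Finset ι}
    {b : ι} (h : b ∈ s) (f : ι → β) :
    (∑ a ∈ s, if a = b then f a else 0) = f b := by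
  rw [Finset.sum_ite_eq' s b f, if_pos h]

lemma wordProb_nonneg (hP : ∀ a w, 0 ≤ P a w) : ∀ (u w : List A), 0 ≤ wordProb θ P u w
  | [], w => by unfold wordProb; split <;> norm_num
  | a :: u, w => by
      unfold wordProb
      refine Finset.sum_nonneg fun v hv => mul_nonneg (hP a v) ?_
      split
      · exact wordProb_nonneg hP u _
      · exact le_rfl

lemma wordProb_eq_zero : ∀ {u w : List A}, w ∉ reals θ u → wordProb θ P u w = 0
  | [], w, h => by
      rw [mem_reals_nil] at h
      unfold wordProb; rw [if_neg h]
  | a :: u, w, h => by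
      unfold wordProb
      refine Finset.sum_eq_zero fun v hv => ?_
      split
      · rename_i hpre
        have hnm : w.drop v.length ∉ reals θ u := fun hc => h
          (mem_reals_cons.2 ⟨v, hv, _, hc, (List.prefix_iff_eq_append.1 hpre).symm⟩)
        rw [wordProb_eq_zero hnm, mul_zero]
      · rw [mul_zero]

lemma wordProb_cons (a : A) (u y : List A) :
    wordProb θ P (a :: u) y =
      ∑ s ∈ θ a, ∑ t ∈ reals θ u,
        if y = s ++ t then P a s * wordProb θ P u t else 0 := by
  conv_lhs => rw [wordProb]
  refine Finset.sum_congr rfl fun s hs => ?_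
  by_cases hpre : s <+: y
  · rw [if_pos hpre]
    have key : ∀ t : List A, (y = s ++ t) ↔ (t = y.drop s.length) := by
      intro t
      constructor
      · rintro rfl; rw [List.drop_left]
      · rintro rfl; exact (List.prefix_iff_eq_append.1 hpre).symm
    have : ∀ t ∈ reals θ u, (if y = s ++ t then P a s * wordProb θ P u t else 0)
        = (if t = y.drop s.length then P a s * wordProb θ P u t else 0) := by
      intro t _; simp only [key t]
    rw [Finset.sum_congr rfl this, Finset.sum_ite_eq' (reals θ u) (y.drop s.length)]
    split
    · rfl
    · rename_i hnm
      rw [wordProb_eq_zero hnm, mul_zero]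
  · rw [if_neg hpre, mul_zero]
    refine (Finset.sum_eq_zero fun t ht => ?_).symm
    rw [if_neg]
    rintro rfl
    exact hpre ⟨t, rfl⟩

lemma wordProb_sum_one (hθ : ∀ a, (θ a).Nonempty) (hPsum : ∀ a, ∑ w ∈ θ a, P a w = 1) :
    ∀ u : List A, ∑ w ∈ reals θ u, wordProb θ P u w = 1
  | [] => by simp [reals, wordProb]
  | a :: u => by
      have hrec := wordProb_sum_one hθ hPsum u
      calc ∑ w ∈ reals θ (a :: u), wordProb θ P (a :: u) w
          = ∑ w ∈ reals θ (a :: u), ∑ s ∈ θ a, ∑ t ∈ reals θ u,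
              if w = s ++ t then P a s * wordProb θ P u t else 0 :=
            Finset.sum_congr rfl fun w _ => wordProb_cons a u w
        _ = ∑ s ∈ θ a, ∑ t ∈ reals θ u, ∑ w ∈ reals θ (a :: u),
              if w = s ++ t then P a s * wordProb θ P u t else 0 := by
            rw [Finset.sum_comm]
            exact Finset.sum_congr rfl fun s _ => Finset.sum_comm
        _ = ∑ s ∈ θ a, ∑ t ∈ reals θ u, P a s * wordProb θ P u t := by
            refine Finset.sum_congr rfl fun s hs => Finset.sum_congr rfl fun t ht => ?_
            exact sum_ite_eq_of_mem (mem_reals_cons.2 ⟨s, hs, t, ht, rfl⟩) _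
        _ = 1 := by
            rw [← Finset.sum_mul_sum, hPsum a, hrec, one_mul]

lemma wordProb_pos (hP : ∀ a w, 0 ≤ P a w) (hPpos : ∀ a, ∀ w ∈ θ a, 0 < P a w) :
    ∀ {u w : List A}, w ∈ reals θ u → 0 < wordProb θ P u w
  | [], w, h => by
      rw [mem_reals_nil] at h
      subst h; unfold wordProb; norm_num
  | a :: u, w, h => by
      rcases mem_reals_cons.1 h with ⟨s, hs, t, ht, rfl⟩
      rw [wordProb_cons]
      have hterm : 0 < P a s * wordProb θ P u t :=
        mul_pos (hPpos a s hs) (wordProb_pos hP hPpos ht)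
      have hnn : ∀ s' ∈ θ a, 0 ≤ ∑ t' ∈ reals θ u,
          if s ++ t = s' ++ t' then P a s' * wordProb θ P u t' else 0 := by
        intro s' _
        refine Finset.sum_nonneg fun t' _ => ?_
        split
        · exact mul_nonneg (hP a s') (wordProb_nonneg hP u t')
        · exact le_rfl
      refine Finset.sum_pos' hnn ⟨s, hs, ?_⟩
      have hnn' : ∀ t' ∈ reals θ u, (0:ℝ) ≤
          if s ++ t = s ++ t' then P a s * wordProb θ P u t' else 0 := by
        intro t' _
        split
        · exact mul_nonneg (hP a s) (wordProb_nonneg hP u t')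
        · exact le_rfl
      refine Finset.sum_pos' hnn' ⟨t, ht, ?_⟩
      rw [if_pos rfl]
      exact hterm

lemma iterProb_nonneg (hP : ∀ a w, 0 ≤ P a w) :
    ∀ (n : ℕ) (u w : List A), 0 ≤ iterProb θ P n u w
  | 0, u, w => by unfold iterProb; split <;> norm_num
  | n + 1, u, w => by
      unfold iterProb
      exact Finset.sum_nonneg fun v _ =>
        mul_nonneg (wordProb_nonneg hP u v) (iterProb_nonneg hP n v w)

lemma realsIter_subset {n : ℕ} {u v : List A} (hv : v ∈ reals θ u) :
    realsIter θ n v ⊆ realsIter θ (n + 1) u := by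
  intro x hx
  rw [realsIter_succ]
  exact Finset.mem_biUnion.2 ⟨v, hv, hx⟩

lemma iterProb_eq_zero : ∀ {n : ℕ} {u w : List A}, w ∉ realsIter θ n u →
    iterProb θ P n u w = 0
  | 0, u, w, h => by
      rw [realsIter_zero, Finset.mem_singleton] at h
      unfold iterProb
      rw [if_neg (fun hc => h hc.symm)]
  | n + 1, u, w, h => by
      unfold iterProb
      refine Finset.sum_eq_zero fun v hv => ?_
      have : w ∉ realsIter θ n v := fun hc => h (realsIter_subset hv hc)
      rw [iterProb_eq_zero this, mul_zero]

lemma iterProb_sum_one (hθ : ∀ a, (θ a).Nonempty) (hPsum : ∀ a, ∑ w ∈ θ a, P a w = 1) :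
    ∀ (n : ℕ) (u : List A), ∑ w ∈ realsIter θ n u, iterProb θ P n u w = 1
  | 0, u => by simp [realsIter_zero, iterProb]
  | n + 1, u => by
      have : ∀ w, iterProb θ P (n+1) u w
          = ∑ v ∈ reals θ u, wordProb θ P u v * iterProb θ P n v w := fun w => rfl
      calc ∑ w ∈ realsIter θ (n+1) u, iterProb θ P (n+1) u w
          = ∑ v ∈ reals θ u, ∑ w ∈ realsIter θ (n+1) u,
              wordProb θ P u v * iterProb θ P n v w := by
            rw [Finset.sum_comm]
            exact Finset.sum_congr rfl fun w _ => this w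
        _ = ∑ v ∈ reals θ u, wordProb θ P u v := by
            refine Finset.sum_congr rfl fun v hv => ?_
            rw [← Finset.mul_sum]
            have hsub := realsIter_subset (n := n) hv
            rw [← Finset.sum_subset hsub (fun x _ hx => iterProb_eq_zero hx),
              iterProb_sum_one hθ hPsum n v, mul_one]
        _ = 1 := wordProb_sum_one hθ hPsum u

lemma iterProb_pos (hP : ∀ a w, 0 ≤ P a w) (hPpos : ∀ a, ∀ w ∈ θ a, 0 < P a w) :
    ∀ {n : ℕ} {u w : List A}, w ∈ realsIter θ n u → 0 < iterProb θ P n u w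
  | 0, u, w, h => by
      rw [realsIter_zero, Finset.mem_singleton] at h
      subst h; unfold iterProb; norm_num
  | n + 1, u, w, h => by
      rw [realsIter_succ, Finset.mem_biUnion] at h
      rcases h with ⟨v, hv, hw⟩
      unfold iterProb
      refine Finset.sum_pos' (fun v' _ => mul_nonneg (wordProb_nonneg hP u v')
        (iterProb_nonneg hP n v' w)) ⟨v, hv, ?_⟩
      exact mul_pos (wordProb_pos hP hPpos hv) (iterProb_pos hP hPpos hw)

lemma iterProb_CK (m j : ℕ) (u w : List A) :
    iterProb θ P (m + j) u w =
      ∑ v ∈ realsIter θ m u, iterProb θ P m u v * iterProb θ P j v w := by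
  induction m generalizing u with
  | zero =>
      simp [realsIter_zero, iterProb]
  | succ m ih =>
      have hidx : m + 1 + j = (m + j) + 1 := by omega
      rw [hidx]
      show ∑ y ∈ reals θ u, wordProb θ P u y * iterProb θ P (m + j) y w = _
      calc ∑ y ∈ reals θ u, wordProb θ P u y * iterProb θ P (m + j) y w
          = ∑ y ∈ reals θ u, ∑ v ∈ realsIter θ m y,
              wordProb θ P u y * (iterProb θ P m y v * iterProb θ P j v w) := by
            refine Finset.sum_congr rfl fun y hy => ?_
            rw [ih, Finset.mul_sum]
        _ = ∑ y ∈ reals θ u, ∑ v ∈ realsIter θ (m + 1) u,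
              wordProb θ P u y * (iterProb θ P m y v * iterProb θ P j v w) := by
            refine Finset.sum_congr rfl fun y hy => ?_
            refine Finset.sum_subset (realsIter_subset hy) fun v _ hv => ?_
            rw [iterProb_eq_zero hv, zero_mul, mul_zero]
        _ = ∑ v ∈ realsIter θ (m + 1) u,
              (∑ y ∈ reals θ u, wordProb θ P u y * iterProb θ P m y v)
                * iterProb θ P j v w := by
            rw [Finset.sum_comm]
            refine Finset.sum_congr rfl fun v _ => ?_
            rw [Finset.sum_mul]
            exact Finset.sum_congr rfl fun y _ => by ring
        _ = ∑ v ∈ realsIter θ (m + 1) u,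
              iterProb θ P (m + 1) u v * iterProb θ P j v w := rfl

lemma sum_ite_eq_of_mem' {ι β : Type*} [DecidableEq ι] [AddCommMonoid β] {s : Finset ι}
    {b : ι} (h : b ∈ s) (f : ι → β) :
    (∑ a ∈ s, if b = a then f a else 0) = f b := by
  rw [Finset.sum_ite_eq s b f, if_pos h]

lemma wordProb_append (hθ : ∀ a, (θ a).Nonempty) :
    ∀ (u u' y : List A), wordProb θ P (u ++ u') y =
      ∑ s ∈ reals θ u, ∑ t ∈ reals θ u',
        (if y = s ++ t then wordProb θ P u s * wordProb θ P u' t else 0)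
  | [], u', y => by
      have hre : reals θ ([] : List A) = {[]} := by ext x; simp [mem_reals_nil]
      rw [List.nil_append, hre, Finset.sum_singleton]
      have h1 : wordProb θ P ([] : List A) [] = 1 := by unfold wordProb; rw [if_pos rfl]
      simp only [h1, one_mul, List.nil_append]
      by_cases hy : y ∈ reals θ u'
      · exact (sum_ite_eq_of_mem' hy _).symm
      · rw [wordProb_eq_zero hy]
        exact (Finset.sum_eq_zero fun t ht => by
          rw [if_neg]; rintro rfl; exact hy ht).symm
  | a :: u, u', y => by
      rw [List.cons_append, wordProb_cons]
      calc (∑ s₀ ∈ θ a, ∑ t₀ ∈ reals θ (u ++ u'),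
            (if y = s₀ ++ t₀ then P a s₀ * wordProb θ P (u ++ u') t₀ else 0))
          = ∑ s₀ ∈ θ a, ∑ t₀ ∈ reals θ (u ++ u'), ∑ c ∈ reals θ u, ∑ d ∈ reals θ u',
              (if y = s₀ ++ t₀ then (if t₀ = c ++ d then
                P a s₀ * (wordProb θ P u c * wordProb θ P u' d) else 0) else 0) := by
            refine Finset.sum_congr rfl fun s₀ _ => Finset.sum_congr rfl fun t₀ ht₀ => ?_
            by_cases hy : y = s₀ ++ t₀
            · rw [if_pos hy, wordProb_append hθ u u' t₀, Finset.mul_sum]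
              refine Finset.sum_congr rfl fun c _ => ?_
              rw [Finset.mul_sum]
              refine Finset.sum_congr rfl fun d _ => ?_
              rw [if_pos hy]
              split
              · rfl
              · rw [mul_zero]
            · rw [if_neg hy]
              refine (Finset.sum_eq_zero fun c _ => Finset.sum_eq_zero fun d _ => ?_).symm
              rw [if_neg hy]
        _ = ∑ s₀ ∈ θ a, ∑ c ∈ reals θ u, ∑ d ∈ reals θ u',
              (if y = s₀ ++ (c ++ d) then
                P a s₀ * (wordProb θ P u c * wordProb θ P u' d) else 0) := by
            refine Finset.sum_congr rfl fun s₀ _ => ?_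
            rw [Finset.sum_comm]
            refine Finset.sum_congr rfl fun c hc => ?_
            rw [Finset.sum_comm]
            refine Finset.sum_congr rfl fun d hd => ?_
            have hmem : c ++ d ∈ reals θ (u ++ u') := mem_reals_append.2 ⟨c, hc, d, hd, rfl⟩
            rw [← sum_ite_eq_of_mem hmem (fun t₀ => if y = s₀ ++ t₀ then
              P a s₀ * (wordProb θ P u c * wordProb θ P u' d) else 0)]
            refine Finset.sum_congr rfl fun t₀ _ => ?_
            by_cases h1 : t₀ = c ++ d
            · subst h1; simp
            · simp only [if_neg h1]
              split <;> rfl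
        _ = ∑ s ∈ reals θ (a :: u), ∑ d ∈ reals θ u',
              (if y = s ++ d then wordProb θ P (a :: u) s * wordProb θ P u' d else 0) := by
            have expand : ∀ s ∈ reals θ (a :: u), ∀ d ∈ reals θ u',
                (if y = s ++ d then wordProb θ P (a :: u) s * wordProb θ P u' d else 0)
                  = ∑ s₀ ∈ θ a, ∑ c ∈ reals θ u,
                      (if s = s₀ ++ c then
                        (if y = s ++ d then
                          P a s₀ * (wordProb θ P u c * wordProb θ P u' d) else 0)
                      else 0) := by
              intro s _ d _
              by_cases hy : y = s ++ d
              · rw [if_pos hy, wordProb_cons, Finset.sum_mul]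
                refine Finset.sum_congr rfl fun s₀ _ => ?_
                rw [Finset.sum_mul]
                refine Finset.sum_congr rfl fun c _ => ?_
                by_cases h1 : s = s₀ ++ c
                · rw [if_pos h1, if_pos h1, if_pos hy]; ring
                · rw [if_neg h1, if_neg h1, zero_mul]
              · rw [if_neg hy]
                refine (Finset.sum_eq_zero fun s₀ _ => Finset.sum_eq_zero fun c _ => ?_).symm
                split <;> rfl
            symm
            calc ∑ s ∈ reals θ (a :: u), ∑ d ∈ reals θ u',
                  (if y = s ++ d then wordProb θ P (a :: u) s * wordProb θ P u' d else 0)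
                = ∑ s ∈ reals θ (a :: u), ∑ d ∈ reals θ u', ∑ s₀ ∈ θ a, ∑ c ∈ reals θ u,
                    (if s = s₀ ++ c then (if y = s ++ d then
                      P a s₀ * (wordProb θ P u c * wordProb θ P u' d) else 0) else 0) :=
                  Finset.sum_congr rfl fun s hs => Finset.sum_congr rfl fun d hd =>
                    expand s hs d hd
              _ = ∑ d ∈ reals θ u', ∑ s₀ ∈ θ a, ∑ c ∈ reals θ u, ∑ s ∈ reals θ (a :: u),
                    (if s = s₀ ++ c then (if y = s ++ d then
                      P a s₀ * (wordProb θ P u c * wordProb θ P u' d) else 0) else 0) := by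
                  rw [Finset.sum_comm]
                  refine Finset.sum_congr rfl fun d _ => ?_
                  rw [Finset.sum_comm]
                  refine Finset.sum_congr rfl fun s₀ _ => Finset.sum_comm
              _ = ∑ d ∈ reals θ u', ∑ s₀ ∈ θ a, ∑ c ∈ reals θ u,
                    (if y = (s₀ ++ c) ++ d then
                      P a s₀ * (wordProb θ P u c * wordProb θ P u' d) else 0) := by
                  refine Finset.sum_congr rfl fun d _ => Finset.sum_congr rfl fun s₀ hs₀ =>
                    Finset.sum_congr rfl fun c hc => ?_
                  exact sum_ite_eq_of_mem (mem_reals_cons.2 ⟨s₀, hs₀, c, hc, rfl⟩) _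
              _ = ∑ s₀ ∈ θ a, ∑ c ∈ reals θ u, ∑ d ∈ reals θ u',
                    (if y = s₀ ++ (c ++ d) then
                      P a s₀ * (wordProb θ P u c * wordProb θ P u' d) else 0) := by
                  rw [Finset.sum_comm]
                  refine Finset.sum_congr rfl fun s₀ _ => ?_
                  rw [Finset.sum_comm]
                  refine Finset.sum_congr rfl fun c _ =>
                    Finset.sum_congr rfl fun d _ => by rw [List.append_assoc]

lemma iterProb_append (hθ : ∀ a, (θ a).Nonempty) :
    ∀ (k : ℕ) (u u' w : List A), iterProb θ P k (u ++ u') w =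
      ∑ s ∈ realsIter θ k u, ∑ t ∈ realsIter θ k u',
        (if w = s ++ t then iterProb θ P k u s * iterProb θ P k u' t else 0)
  | 0, u, u', w => by
      have h0 : ∀ x y : List A, iterProb θ P 0 x y = if x = y then (1:ℝ) else 0 :=
        fun _ _ => rfl
      simp only [realsIter_zero, Finset.sum_singleton, h0]
      simp [eq_comm]
  | k + 1, u, u', w => by
      show ∑ y ∈ reals θ (u ++ u'), wordProb θ P (u ++ u') y * iterProb θ P k y w = _
      calc ∑ y ∈ reals θ (u ++ u'), wordProb θ P (u ++ u') y * iterProb θ P k y w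
          = ∑ y ∈ reals θ (u ++ u'), ∑ c ∈ reals θ u, ∑ d ∈ reals θ u',
              (if y = c ++ d then
                (wordProb θ P u c * wordProb θ P u' d) * iterProb θ P k y w else 0) := by
            refine Finset.sum_congr rfl fun y _ => ?_
            rw [wordProb_append hθ, Finset.sum_mul]
            refine Finset.sum_congr rfl fun c _ => ?_
            rw [Finset.sum_mul]
            refine Finset.sum_congr rfl fun d _ => ?_
            split
            · rfl
            · rw [zero_mul]
        _ = ∑ c ∈ reals θ u, ∑ d ∈ reals θ u',
              (wordProb θ P u c * wordProb θ P u' d) * iterProb θ P k (c ++ d) w := by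
            rw [Finset.sum_comm]
            refine Finset.sum_congr rfl fun c hc => ?_
            rw [Finset.sum_comm]
            refine Finset.sum_congr rfl fun d hd => ?_
            have hmem : c ++ d ∈ reals θ (u ++ u') := mem_reals_append.2 ⟨c, hc, d, hd, rfl⟩
            have := sum_ite_eq_of_mem hmem
              (fun y => (wordProb θ P u c * wordProb θ P u' d) * iterProb θ P k y w)
            exact this
        _ = ∑ c ∈ reals θ u, ∑ d ∈ reals θ u',
              ∑ s ∈ realsIter θ (k+1) u, ∑ t ∈ realsIter θ (k+1) u',
                (if w = s ++ t then
                  (wordProb θ P u c * iterProb θ P k c s) *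
                    (wordProb θ P u' d * iterProb θ P k d t) else 0) := by
            refine Finset.sum_congr rfl fun c hc => Finset.sum_congr rfl fun d hd => ?_
            rw [iterProb_append hθ k c d w, Finset.mul_sum]
            have hsubc := realsIter_subset (n := k) hc
            have hsubd := realsIter_subset (n := k) hd
            rw [Finset.sum_subset hsubc]
            · refine Finset.sum_congr rfl fun s hs => ?_
              rw [Finset.mul_sum, Finset.sum_subset hsubd]
              · refine Finset.sum_congr rfl fun t ht => ?_
                split
                · ring
                · rw [mul_zero]
              · intro t _ ht
                split
                · rw [iterProb_eq_zero ht, mul_zero, mul_zero]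
                · rw [mul_zero]
            · intro s _ hs
              have hz : (∑ t ∈ realsIter θ k d,
                  (if w = s ++ t then iterProb θ P k c s * iterProb θ P k d t else 0)) = 0 :=
                Finset.sum_eq_zero fun t _ => by
                  split
                  · rw [iterProb_eq_zero hs, zero_mul]
                  · rfl
              rw [hz, mul_zero]
        _ = ∑ s ∈ realsIter θ (k+1) u, ∑ t ∈ realsIter θ (k+1) u',
              ∑ c ∈ reals θ u, ∑ d ∈ reals θ u',
                (if w = s ++ t then
                  (wordProb θ P u c * iterProb θ P k c s) *
                    (wordProb θ P u' d * iterProb θ P k d t) else 0) := by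
            have h1 : ∀ c ∈ reals θ u,
                (∑ d ∈ reals θ u', ∑ s ∈ realsIter θ (k+1) u, ∑ t ∈ realsIter θ (k+1) u',
                  (if w = s ++ t then
                    (wordProb θ P u c * iterProb θ P k c s) *
                      (wordProb θ P u' d * iterProb θ P k d t) else 0))
                = ∑ s ∈ realsIter θ (k+1) u, ∑ t ∈ realsIter θ (k+1) u', ∑ d ∈ reals θ u',
                  (if w = s ++ t then
                    (wordProb θ P u c * iterProb θ P k c s) *
                      (wordProb θ P u' d * iterProb θ P k d t) else 0) := by
              intro c _
              rw [Finset.sum_comm]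
              exact Finset.sum_congr rfl fun s _ => Finset.sum_comm
            rw [Finset.sum_congr rfl h1, Finset.sum_comm]
            exact Finset.sum_congr rfl fun s _ => Finset.sum_comm
        _ = ∑ s ∈ realsIter θ (k+1) u, ∑ t ∈ realsIter θ (k+1) u',
              (if w = s ++ t then
                iterProb θ P (k+1) u s * iterProb θ P (k+1) u' t else 0) := by
            refine Finset.sum_congr rfl fun s _ => Finset.sum_congr rfl fun t _ => ?_
            by_cases hw : w = s ++ t
            · simp only [if_pos hw]
              show _ = (∑ c ∈ reals θ u, wordProb θ P u c * iterProb θ P k c s) *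
                (∑ d ∈ reals θ u', wordProb θ P u' d * iterProb θ P k d t)
              rw [Finset.sum_mul_sum]
            · simp only [if_neg hw]
              exact Finset.sum_eq_zero fun c _ => Finset.sum_eq_zero fun d _ => rfl
/-! ### Phase 3: entropy basics -/

lemma negMulLog_add_lt {x y : ℝ} (hx : 0 < x) (hy : 0 < y) :
    Real.negMulLog (x + y) < Real.negMulLog x + Real.negMulLog y := by
  unfold Real.negMulLog
  have h1 : Real.log x < Real.log (x + y) := Real.log_lt_log hx (by linarith)
  have h2 : Real.log y < Real.log (x + y) := Real.log_lt_log hy (by linarith)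
  nlinarith

lemma negMulLog_add_le {x y : ℝ} (hx : 0 ≤ x) (hy : 0 ≤ y) :
    Real.negMulLog (x + y) ≤ Real.negMulLog x + Real.negMulLog y := by
  rcases eq_or_lt_of_le hx with h | hx'
  · simp [← h]
  rcases eq_or_lt_of_le hy with h | hy'
  · simp [← h]
  exact (negMulLog_add_lt hx' hy').le

lemma sum_negMulLog_le {ι : Type*} {s : Finset ι} {f : ι → ℝ} (hf : ∀ i ∈ s, 0 ≤ f i) :
    Real.negMulLog (∑ i ∈ s, f i) ≤ ∑ i ∈ s, Real.negMulLog (f i) := by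
  classical
  induction s using Finset.induction_on with
  | empty => simp
  | insert a s hnotmem ih =>
      rw [Finset.sum_insert hnotmem, Finset.sum_insert hnotmem]
      calc Real.negMulLog (f a + ∑ i ∈ s, f i)
          ≤ Real.negMulLog (f a) + Real.negMulLog (∑ i ∈ s, f i) :=
            negMulLog_add_le (hf a (Finset.mem_insert_self a s))
              (Finset.sum_nonneg fun i hi => hf i (Finset.mem_insert_of_mem hi))
        _ ≤ _ := by
            have := ih (fun i hi => hf i (Finset.mem_insert_of_mem hi))
            linarith

lemma sum_negMulLog_lt {ι : Type*} {s : Finset ι} {f : ι → ℝ} (hf : ∀ i ∈ s, 0 ≤ f i)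
    {i j : ι} (hi : i ∈ s) (hj : j ∈ s) (hij : i ≠ j) (hfi : 0 < f i) (hfj : 0 < f j) :
    Real.negMulLog (∑ k ∈ s, f k) < ∑ k ∈ s, Real.negMulLog (f k) := by
  classical
  have hjmem : j ∈ s.erase i := Finset.mem_erase.2 ⟨hij.symm, hj⟩
  have hT : 0 < ∑ k ∈ s.erase i, f k :=
    lt_of_lt_of_le hfj (Finset.single_le_sum (fun k hk => hf k (Finset.mem_of_mem_erase hk))
      hjmem)
  have hsplit : ∑ k ∈ s, f k = f i + ∑ k ∈ s.erase i, f k :=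
    (Finset.add_sum_erase s f hi).symm
  have hsplit2 : ∑ k ∈ s, Real.negMulLog (f k)
      = Real.negMulLog (f i) + ∑ k ∈ s.erase i, Real.negMulLog (f k) :=
    (Finset.add_sum_erase s _ hi).symm
  rw [hsplit, hsplit2]
  calc Real.negMulLog (f i + ∑ k ∈ s.erase i, f k)
      < Real.negMulLog (f i) + Real.negMulLog (∑ k ∈ s.erase i, f k) :=
        negMulLog_add_lt hfi hT
    _ ≤ _ := by
        have := sum_negMulLog_le (s := s.erase i) (f := f)
          (fun k hk => hf k (Finset.mem_of_mem_erase hk))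
        linarith

lemma sum_negMulLog_eq_iff {ι : Type*} {s : Finset ι} {f : ι → ℝ} (hf : ∀ i ∈ s, 0 ≤ f i) :
    Real.negMulLog (∑ i ∈ s, f i) = ∑ i ∈ s, Real.negMulLog (f i) ↔
      ∀ i ∈ s, ∀ j ∈ s, 0 < f i → 0 < f j → i = j := by
  classical
  constructor
  · intro heq i hi j hj hfi hfj
    by_contra hij
    exact absurd heq (ne_of_lt (sum_negMulLog_lt hf hi hj hij hfi hfj))
  · intro h
    by_cases hex : ∃ i ∈ s, 0 < f i
    · rcases hex with ⟨i, hi, hfi⟩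
      have hz : ∀ j ∈ s, j ≠ i → f j = 0 := by
        intro j hj hne
        rcases eq_or_lt_of_le (hf j hj) with h' | h'
        · exact h'.symm
        · exact absurd (h j hj i hi h' hfi) hne
      rw [Finset.sum_eq_single_of_mem i hi (fun j hj hne => hz j hj hne),
        Finset.sum_eq_single_of_mem i hi (fun j hj hne => by rw [hz j hj hne]; simp)]
    · push_neg at hex
      have hz : ∀ i ∈ s, f i = 0 := fun i hi => le_antisymm (hex i hi) (hf i hi)
      rw [Finset.sum_eq_zero hz, Finset.sum_eq_zero fun i hi => by rw [hz i hi]; simp]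
      simp

/-- The entropy of the random word `ϑ_P^m(u)`. -/
noncomputable def Hword (θ : A → Finset (List A)) (P : A → List A → ℝ)
    (m : ℕ) (u : List A) : ℝ :=
  ∑ w ∈ realsIter θ m u, Real.negMulLog (iterProb θ P m u w)

lemma Hvec_eq_Hword (k : ℕ) (a : A) : Hvec θ P k a = Hword θ P k [a] := rfl

/-! URP interface -/

lemma urp_flatten (hU : UniqueRealisationPaths θ) {v : List A} (hv : Legal θ v) (k : ℕ)
    {ws₁ ws₂ : List (List A)}
    (h₁ : List.Forall₂ (fun c y => y ∈ realsIter θ k [c]) v ws₁)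
    (h₂ : List.Forall₂ (fun c y => y ∈ realsIter θ k [c]) v ws₂)
    (hfl : ws₁.flatten = ws₂.flatten) : ws₁ = ws₂ := by
  rcases List.forall₂_iff_get.1 h₁ with ⟨hl₁, hg₁⟩
  rcases List.forall₂_iff_get.1 h₂ with ⟨hl₂, hg₂⟩
  set f : Fin v.length → List A := fun i => ws₁.get ⟨i.1, by omega⟩ with hf
  set g : Fin v.length → List A := fun i => ws₂.get ⟨i.1, by omega⟩ with hg
  have hof : List.ofFn f = ws₁ := by
    refine List.ext_get (by simp [← hl₁]) fun i h1 h2 => ?_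
    simp [hf]
  have hog : List.ofFn g = ws₂ := by
    refine List.ext_get (by simp [← hl₂]) fun i h1 h2 => ?_
    simp [hg]
  have := hU v hv k f g (fun i => hg₁ i.1 i.2 (by omega)) (fun i => hg₂ i.1 i.2 (by omega))
    (by rw [hof, hog]; exact hfl)
  rw [← hof, ← hog, this]

lemma urp_split (hU : UniqueRealisationPaths θ) {a : A} {u : List A}
    (hL : Legal θ (a :: u)) (k : ℕ) {s s' t t' : List A}
    (hs : s ∈ realsIter θ k [a]) (hs' : s' ∈ realsIter θ k [a])
    (ht : t ∈ realsIter θ k u) (ht' : t' ∈ realsIter θ k u)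
    (h : s ++ t = s' ++ t') : s = s' ∧ t = t' := by
  obtain ⟨ws, hws, rfl⟩ := mem_realsIter_letters.1 ht
  obtain ⟨ws', hws', rfl⟩ := mem_realsIter_letters.1 ht'
  have h₁ : List.Forall₂ (fun c y => y ∈ realsIter θ k [c]) (a :: u) (s :: ws) :=
    List.Forall₂.cons hs hws
  have h₂ : List.Forall₂ (fun c y => y ∈ realsIter θ k [c]) (a :: u) (s' :: ws') :=
    List.Forall₂.cons hs' hws'
  have := urp_flatten hU hL k h₁ h₂ (by simpa using h)
  injection this with h1 h2
  exact ⟨h1, by rw [h2]⟩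
/-! ### Phase 4: conditional entropy bounds and matrix counts -/

lemma mem_reals_singleton {a : A} {x : List A} : x ∈ reals θ [a] ↔ x ∈ θ a := by
  rw [mem_reals_cons]
  constructor
  · rintro ⟨v, hv, w, hw, rfl⟩
    rw [mem_reals_nil] at hw
    subst hw; simpa using hv
  · intro hx
    exact ⟨x, hx, [], mem_reals_nil.2 rfl, by simp⟩

lemma reals_singleton (a : A) : reals θ [a] = θ a := by
  ext x; exact mem_reals_singleton

lemma realsIter_one (u : List A) : realsIter θ 1 u = reals θ u := by
  ext x
  rw [realsIter_succ]
  simp [realsIter_zero]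

lemma iterProb_one (u w : List A) : iterProb θ P 1 u w = wordProb θ P u w := by
  show ∑ y ∈ reals θ u, wordProb θ P u y * iterProb θ P 0 y w = _
  have : ∀ y ∈ reals θ u, wordProb θ P u y * iterProb θ P 0 y w
      = if y = w then wordProb θ P u y else 0 := by
    intro y _
    show wordProb θ P u y * (if y = w then 1 else 0) = _
    split <;> simp
  rw [Finset.sum_congr rfl this, Finset.sum_ite_eq' (reals θ u) w]
  split
  · rfl
  · rename_i h
    rw [wordProb_eq_zero h]

lemma wordProb_letter {a : A} {v : List A} (hv : v ∈ θ a) :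
    wordProb θ P [a] v = P a v := by
  rw [wordProb_cons a [] v]
  have hre : reals θ ([] : List A) = {[]} := by ext x; simp [mem_reals_nil]
  rw [hre]
  simp only [Finset.sum_singleton, List.append_nil]
  have h1 : wordProb θ P ([] : List A) [] = 1 := by unfold wordProb; rw [if_pos rfl]
  rw [h1]
  have : ∀ s ∈ θ a, (if v = s then P a s * 1 else 0) = if s = v then P a s * 1 else 0 := by
    intro s _; simp [eq_comm]
  rw [Finset.sum_congr rfl this, sum_ite_eq_of_mem hv, mul_one]

lemma mem_realsIter_cons {m : ℕ} {a : A} {u x : List A} :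
    x ∈ realsIter θ m (a :: u) ↔
      ∃ s ∈ realsIter θ m [a], ∃ t ∈ realsIter θ m u, x = s ++ t :=
  mem_realsIter_append (u := [a]) (u' := u)

lemma iterProb_cons (m : ℕ) (a : A) (u w : List A) (hθ : ∀ a, (θ a).Nonempty) :
    iterProb θ P m (a :: u) w =
      ∑ s ∈ realsIter θ m [a], ∑ t ∈ realsIter θ m u,
        (if w = s ++ t then iterProb θ P m [a] s * iterProb θ P m u t else 0) :=
  iterProb_append hθ m [a] u w

lemma sum_sum_negMulLog_mul {S T : Finset (List A)} {p q : List A → ℝ}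
    (hp : ∑ s ∈ S, p s = 1) (hq : ∑ t ∈ T, q t = 1) :
    ∑ s ∈ S, ∑ t ∈ T, Real.negMulLog (p s * q t)
      = (∑ s ∈ S, Real.negMulLog (p s)) + ∑ t ∈ T, Real.negMulLog (q t) := by
  have h1 : ∀ s ∈ S, ∑ t ∈ T, Real.negMulLog (p s * q t)
      = Real.negMulLog (p s) + p s * ∑ t ∈ T, Real.negMulLog (q t) := by
    intro s _
    calc ∑ t ∈ T, Real.negMulLog (p s * q t)
        = ∑ t ∈ T, (q t * Real.negMulLog (p s) + p s * Real.negMulLog (q t)) :=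
          Finset.sum_congr rfl fun t _ => Real.negMulLog_mul (p s) (q t)
      _ = (∑ t ∈ T, q t) * Real.negMulLog (p s) + p s * ∑ t ∈ T, Real.negMulLog (q t) := by
          rw [Finset.sum_add_distrib, ← Finset.sum_mul, ← Finset.mul_sum]
      _ = _ := by rw [hq, one_mul]
  rw [Finset.sum_congr rfl h1, Finset.sum_add_distrib, ← Finset.sum_mul, hp, one_mul]

lemma negMulLog_ite {c : Prop} [Decidable c] (x : ℝ) :
    Real.negMulLog (if c then x else 0) = if c then Real.negMulLog x else 0 := by
  split <;> simp

lemma Hword_cons_core (hθ : ∀ a, (θ a).Nonempty) (hP : ∀ a w, 0 ≤ P a w)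
    (m : ℕ) (a : A) (u : List A) :
    Hword θ P m (a :: u) ≤
      ∑ s ∈ realsIter θ m [a], ∑ t ∈ realsIter θ m u,
        Real.negMulLog (iterProb θ P m [a] s * iterProb θ P m u t) := by
  classical
  set S := realsIter θ m [a]
  set T := realsIter θ m u
  set p : List A → ℝ := iterProb θ P m [a]
  set q : List A → ℝ := iterProb θ P m u
  calc Hword θ P m (a :: u)
      = ∑ w ∈ realsIter θ m (a :: u),
          Real.negMulLog (∑ s ∈ S, ∑ t ∈ T, (if w = s ++ t then p s * q t else 0)) :=
        Finset.sum_congr rfl fun w _ => by rw [iterProb_cons m a u w hθ]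
    _ ≤ ∑ w ∈ realsIter θ m (a :: u), ∑ s ∈ S, ∑ t ∈ T,
          Real.negMulLog (if w = s ++ t then p s * q t else 0) := by
        refine Finset.sum_le_sum fun w _ => ?_
        have hnn : ∀ s ∈ S, 0 ≤ ∑ t ∈ T, (if w = s ++ t then p s * q t else 0) := by
          intro s _
          refine Finset.sum_nonneg fun t _ => ?_
          split
          · exact mul_nonneg (iterProb_nonneg hP m [a] s) (iterProb_nonneg hP m u t)
          · exact le_rfl
        calc Real.negMulLog (∑ s ∈ S, ∑ t ∈ T, (if w = s ++ t then p s * q t else 0))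
            ≤ ∑ s ∈ S, Real.negMulLog (∑ t ∈ T, (if w = s ++ t then p s * q t else 0)) :=
              sum_negMulLog_le hnn
          _ ≤ _ := by
              refine Finset.sum_le_sum fun s _ => sum_negMulLog_le fun t _ => ?_
              split
              · exact mul_nonneg (iterProb_nonneg hP m [a] s) (iterProb_nonneg hP m u t)
              · exact le_rfl
    _ = ∑ s ∈ S, ∑ t ∈ T, ∑ w ∈ realsIter θ m (a :: u),
          (if w = s ++ t then Real.negMulLog (p s * q t) else 0) := by
        rw [Finset.sum_comm]
        refine Finset.sum_congr rfl fun s _ => ?_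
        rw [Finset.sum_comm]
        exact Finset.sum_congr rfl fun t _ => Finset.sum_congr rfl fun w _ =>
          negMulLog_ite _
    _ = ∑ s ∈ S, ∑ t ∈ T, Real.negMulLog (p s * q t) := by
        refine Finset.sum_congr rfl fun s hs => Finset.sum_congr rfl fun t ht => ?_
        have hmem : s ++ t ∈ realsIter θ m (a :: u) :=
          mem_realsIter_append.2 ⟨s, hs, t, ht, rfl⟩
        exact sum_ite_eq_of_mem hmem _

lemma Hword_cons_le (hθ : ∀ a, (θ a).Nonempty) (hP : ∀ a w, 0 ≤ P a w)
    (hPsum : ∀ a, ∑ w ∈ θ a, P a w = 1) (m : ℕ) (a : A) (u : List A) :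
    Hword θ P m (a :: u) ≤ Hvec θ P m a + Hword θ P m u := by
  have := Hword_cons_core hθ hP m a u
  rwa [sum_sum_negMulLog_mul (iterProb_sum_one hθ hPsum m [a]) (iterProb_sum_one hθ hPsum m u)]
    at this

lemma Hword_cons_eq (hθ : ∀ a, (θ a).Nonempty) (hP : ∀ a w, 0 ≤ P a w)
    (hPsum : ∀ a, ∑ w ∈ θ a, P a w = 1) (hU : UniqueRealisationPaths θ)
    {a : A} {u : List A} (hL : Legal θ (a :: u)) (m : ℕ) :
    Hword θ P m (a :: u) = Hvec θ P m a + Hword θ P m u := by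
  classical
  set S := realsIter θ m [a] with hS
  set T := realsIter θ m u with hT
  set p : List A → ℝ := iterProb θ P m [a]
  set q : List A → ℝ := iterProb θ P m u
  have himg : realsIter θ m (a :: u) = (S ×ˢ T).image (fun z => z.1 ++ z.2) := by
    ext w
    rw [Finset.mem_image]
    constructor
    · intro hw
      rcases mem_realsIter_cons.1 hw with ⟨s, hs, t, ht, rfl⟩
      exact ⟨(s, t), Finset.mem_product.2 ⟨hs, ht⟩, rfl⟩
    · rintro ⟨⟨s, t⟩, hz, rfl⟩
      rcases Finset.mem_product.1 hz with ⟨hs, ht⟩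
      exact mem_realsIter_append.2 ⟨s, hs, t, ht, rfl⟩
  have hinj : ∀ z ∈ S ×ˢ T, ∀ z' ∈ S ×ˢ T,
      z.1 ++ z.2 = z'.1 ++ z'.2 → z = z' := by
    rintro ⟨s, t⟩ hz ⟨s', t'⟩ hz' h
    rcases Finset.mem_product.1 hz with ⟨hs, ht⟩
    rcases Finset.mem_product.1 hz' with ⟨hs', ht'⟩
    rcases urp_split hU hL m hs hs' ht ht' h with ⟨h1, h2⟩
    simp only at h1 h2
    exact Prod.ext h1 h2
  have hval : ∀ s ∈ S, ∀ t ∈ T, iterProb θ P m (a :: u) (s ++ t) = p s * q t := by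
    intro s hs t ht
    rw [iterProb_cons m a u (s ++ t) hθ]
    have houter : ∀ s' ∈ S, s' ≠ s →
        (∑ t' ∈ T, if s ++ t = s' ++ t' then p s' * q t' else 0) = 0 := by
      intro s' hs' hne
      refine Finset.sum_eq_zero fun t' ht' => ?_
      rw [if_neg]
      intro hc
      exact hne (urp_split hU hL m hs' hs ht' ht hc.symm).1
    rw [Finset.sum_eq_single_of_mem s hs houter]
    have hinner : ∀ t' ∈ T, t' ≠ t →
        (if s ++ t = s ++ t' then p s * q t' else 0) = 0 := by
      intro t' ht' hne
      rw [if_neg]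
      intro hc
      exact hne (List.append_cancel_left hc).symm
    rw [Finset.sum_eq_single_of_mem t ht hinner, if_pos rfl]
  calc Hword θ P m (a :: u)
      = ∑ z ∈ S ×ˢ T, Real.negMulLog (iterProb θ P m (a :: u) (z.1 ++ z.2)) := by
        unfold Hword
        rw [himg, Finset.sum_image hinj]
    _ = ∑ z ∈ S ×ˢ T, Real.negMulLog (p z.1 * q z.2) := by
        refine Finset.sum_congr rfl fun z hz => ?_
        rcases Finset.mem_product.1 hz with ⟨hs, ht⟩
        rw [hval z.1 hs z.2 ht]
    _ = ∑ s ∈ S, ∑ t ∈ T, Real.negMulLog (p s * q t) := by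
        rw [Finset.sum_product]
    _ = Hvec θ P m a + Hword θ P m u :=
        sum_sum_negMulLog_mul (iterProb_sum_one hθ hPsum m [a]) (iterProb_sum_one hθ hPsum m u)

lemma count_cons_sum (f : A → ℝ) (a : A) (u : List A) :
    ∑ b, ((a :: u).count b : ℝ) * f b = f a + ∑ b, ((u.count b : ℝ)) * f b := by
  have : ∀ b, (((a :: u).count b : ℝ)) * f b
      = ((u.count b : ℝ)) * f b + (if b = a then f b else 0) := by
    intro b
    simp only [List.count_cons, beq_iff_eq]
    by_cases h : a = b
    · rw [if_pos h, if_pos h.symm]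
      push_cast; ring
    · rw [if_neg h, if_neg (fun hc => h hc.symm)]
      push_cast; ring
  rw [Finset.sum_congr rfl fun b _ => this b, Finset.sum_add_distrib,
    Finset.sum_ite_eq' Finset.univ a f, if_pos (Finset.mem_univ a)]
  ring

lemma Hword_nil (hθ : ∀ a, (θ a).Nonempty) (hPsum : ∀ a, ∑ w ∈ θ a, P a w = 1) (m : ℕ) :
    Hword θ P m ([] : List A) = 0 := by
  unfold Hword
  rw [realsIter_nil, Finset.sum_singleton]
  have h1 : iterProb θ P m [] [] = 1 := by
    have := iterProb_sum_one hθ hPsum m ([] : List A)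
    rwa [realsIter_nil, Finset.sum_singleton] at this
  rw [h1]; simp

lemma Hword_le_sum (hθ : ∀ a, (θ a).Nonempty) (hP : ∀ a w, 0 ≤ P a w)
    (hPsum : ∀ a, ∑ w ∈ θ a, P a w = 1) (m : ℕ) :
    ∀ u : List A, Hword θ P m u ≤ ∑ b, (u.count b : ℝ) * Hvec θ P m b := by
  intro u
  induction u with
  | nil => rw [Hword_nil hθ hPsum]; simp
  | cons a u ih =>
      rw [count_cons_sum]
      have := Hword_cons_le hθ hP hPsum m a u
      linarith

lemma Hword_eq_sum (hθ : ∀ a, (θ a).Nonempty) (hP : ∀ a w, 0 ≤ P a w)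
    (hPsum : ∀ a, ∑ w ∈ θ a, P a w = 1) (hU : UniqueRealisationPaths θ) (m : ℕ) :
    ∀ u : List A, Legal θ u → Hword θ P m u = ∑ b, (u.count b : ℝ) * Hvec θ P m b := by
  intro u
  induction u with
  | nil => intro _; rw [Hword_nil hθ hPsum]; simp
  | cons a u ih =>
      intro hL
      have hLu : Legal θ u := hL.infix ⟨[a], [], by simp⟩
      rw [count_cons_sum, Hword_cons_eq hθ hP hPsum hU hL m, ih hLu]
/-! ### Phase 5: matrix counts -/

lemma substM_apply (c a : A) :
    substM θ P c a = ∑ w ∈ θ a, P a w * (w.count c : ℝ) := rfl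

lemma exp_count_word (hθ : ∀ a, (θ a).Nonempty) (hP : ∀ a w, 0 ≤ P a w)
    (hPsum : ∀ a, ∑ w ∈ θ a, P a w = 1) (k : ℕ)
    (hM : ∀ b a, (substM θ P ^ k) b a
      = ∑ w ∈ realsIter θ k [a], iterProb θ P k [a] w * (w.count b : ℝ)) :
    ∀ (u : List A) (b : A),
      ∑ w ∈ realsIter θ k u, iterProb θ P k u w * (w.count b : ℝ)
        = ∑ c, (u.count c : ℝ) * (substM θ P ^ k) b c := by
  intro u
  induction u with
  | nil => intro b; rw [realsIter_nil]; simp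
  | cons a u ih =>
      intro b
      set S := realsIter θ k [a]
      set T := realsIter θ k u
      set p : List A → ℝ := iterProb θ P k [a]
      set q : List A → ℝ := iterProb θ P k u
      calc ∑ w ∈ realsIter θ k (a :: u), iterProb θ P k (a :: u) w * (w.count b : ℝ)
          = ∑ w ∈ realsIter θ k (a :: u), ∑ s ∈ S, ∑ t ∈ T,
              (if w = s ++ t then p s * q t * (w.count b : ℝ) else 0) := by
            refine Finset.sum_congr rfl fun w _ => ?_
            rw [iterProb_cons k a u w hθ, Finset.sum_mul]
            refine Finset.sum_congr rfl fun s _ => ?_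
            rw [Finset.sum_mul]
            refine Finset.sum_congr rfl fun t _ => ?_
            split
            · rfl
            · rw [zero_mul]
        _ = ∑ s ∈ S, ∑ t ∈ T, ∑ w ∈ realsIter θ k (a :: u),
              (if w = s ++ t then p s * q t * (w.count b : ℝ) else 0) := by
            rw [Finset.sum_comm]
            refine Finset.sum_congr rfl fun s _ => Finset.sum_comm
        _ = ∑ s ∈ S, ∑ t ∈ T, p s * q t * (((s ++ t).count b : ℝ)) := by
            refine Finset.sum_congr rfl fun s hs => Finset.sum_congr rfl fun t ht => ?_
            exact sum_ite_eq_of_mem (mem_realsIter_cons.2 ⟨s, hs, t, ht, rfl⟩) _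
        _ = ∑ s ∈ S, ∑ t ∈ T, (p s * (s.count b : ℝ) * q t + p s * (q t * (t.count b : ℝ))) := by
            refine Finset.sum_congr rfl fun s _ => Finset.sum_congr rfl fun t _ => ?_
            rw [List.count_append]
            push_cast
            ring
        _ = (∑ s ∈ S, p s * (s.count b : ℝ)) * (∑ t ∈ T, q t)
              + (∑ s ∈ S, p s) * (∑ t ∈ T, q t * (t.count b : ℝ)) := by
            rw [Finset.sum_mul_sum, Finset.sum_mul_sum, ← Finset.sum_add_distrib]
            refine Finset.sum_congr rfl fun s _ => ?_
            rw [← Finset.sum_add_distrib]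
        _ = (substM θ P ^ k) b a + ∑ c, (u.count c : ℝ) * (substM θ P ^ k) b c := by
            rw [iterProb_sum_one hθ hPsum k [a], iterProb_sum_one hθ hPsum k u,
              hM b a, ih b, mul_one, one_mul]
        _ = ∑ c, ((a :: u).count c : ℝ) * (substM θ P ^ k) b c :=
            (count_cons_sum (fun c => (substM θ P ^ k) b c) a u).symm

lemma substM_pow_apply (hθ : ∀ a, (θ a).Nonempty) (hP : ∀ a w, 0 ≤ P a w)
    (hPsum : ∀ a, ∑ w ∈ θ a, P a w = 1) :
    ∀ (k : ℕ) (b a : A), (substM θ P ^ k) b a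
      = ∑ w ∈ realsIter θ k [a], iterProb θ P k [a] w * (w.count b : ℝ) := by
  intro k
  induction k with
  | zero =>
      intro b a
      rw [pow_zero, Matrix.one_apply, realsIter_zero, Finset.sum_singleton]
      have h1 : iterProb θ P 0 [a] [a] = 1 := if_pos rfl
      rw [h1, one_mul]
      by_cases h : b = a
      · subst h; simp
      · rw [if_neg h]
        have hab : ¬ a = b := fun hc => h hc.symm
        have : [a].count b = 0 := by
          simp [List.count_cons, hab]
        rw [this]; norm_num
  | succ k ih =>
      intro b a
      have hCK : ∀ w, iterProb θ P (k+1) [a] w =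
          ∑ v ∈ realsIter θ 1 [a], iterProb θ P 1 [a] v * iterProb θ P k v w := by
        intro w
        have := iterProb_CK (θ := θ) (P := P) 1 k [a] w
        rwa [show 1 + k = k + 1 by omega] at this
      calc (substM θ P ^ (k+1)) b a
          = ∑ c, (substM θ P ^ k) b c * substM θ P c a := by
            rw [pow_succ, Matrix.mul_apply]
        _ = ∑ c, substM θ P c a * (substM θ P ^ k) b c :=
            Finset.sum_congr rfl fun c _ => mul_comm _ _
        _ = ∑ v ∈ θ a, P a v * ∑ c, ((v.count c : ℝ)) * (substM θ P ^ k) b c := by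
            calc ∑ c, substM θ P c a * (substM θ P ^ k) b c
                = ∑ c, ∑ v ∈ θ a, P a v * (v.count c : ℝ) * (substM θ P ^ k) b c := by
                  refine Finset.sum_congr rfl fun c _ => ?_
                  rw [substM_apply, Finset.sum_mul]
              _ = ∑ v ∈ θ a, ∑ c, P a v * (v.count c : ℝ) * (substM θ P ^ k) b c :=
                  Finset.sum_comm
              _ = ∑ v ∈ θ a, P a v * ∑ c, ((v.count c : ℝ)) * (substM θ P ^ k) b c := by
                  refine Finset.sum_congr rfl fun v _ => ?_
                  rw [Finset.mul_sum]
                  exact Finset.sum_congr rfl fun c _ => by ring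
        _ = ∑ v ∈ realsIter θ 1 [a], iterProb θ P 1 [a] v *
              ∑ c, ((v.count c : ℝ)) * (substM θ P ^ k) b c := by
            rw [realsIter_one, reals_singleton]
            refine Finset.sum_congr rfl fun v hv => ?_
            rw [iterProb_one, wordProb_letter hv]
        _ = ∑ v ∈ realsIter θ 1 [a], iterProb θ P 1 [a] v *
              ∑ w ∈ realsIter θ k v, iterProb θ P k v w * (w.count b : ℝ) := by
            refine Finset.sum_congr rfl fun v hv => ?_
            rw [exp_count_word hθ hP hPsum k ih v b]
        _ = ∑ v ∈ realsIter θ 1 [a], ∑ w ∈ realsIter θ (k+1) [a],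
              iterProb θ P 1 [a] v * (iterProb θ P k v w * (w.count b : ℝ)) := by
            refine Finset.sum_congr rfl fun v hv => ?_
            rw [Finset.mul_sum]
            refine Finset.sum_subset ?_ ?_
            · intro w hw
              have : w ∈ realsIter θ (1 + k) [a] := mem_realsIter_comp hv hw
              rwa [show 1 + k = k + 1 by omega] at this
            · intro w _ hw
              rw [iterProb_eq_zero hw, zero_mul, mul_zero]
        _ = ∑ w ∈ realsIter θ (k+1) [a], iterProb θ P (k+1) [a] w * (w.count b : ℝ) := by
            rw [Finset.sum_comm]
            refine Finset.sum_congr rfl fun w _ => ?_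
            rw [hCK w, Finset.sum_mul]
            exact Finset.sum_congr rfl fun v _ => by ring

lemma pow_mulVec {lam : ℝ} {R : A → ℝ} (hEig : (substM θ P).mulVec R = lam • R) :
    ∀ k : ℕ, (substM θ P ^ k).mulVec R = (lam ^ k) • R := by
  intro k
  induction k with
  | zero => simp [Matrix.one_mulVec]
  | succ k ih =>
      rw [pow_succ', pow_succ']
      rw [← Matrix.mulVec_mulVec, ih, Matrix.mulVec_smul, hEig, smul_smul, mul_comm]
/-! ### Phase 6: the entropy chain rule with equality characterisation -/

lemma chain_rule (hθ : ∀ a, (θ a).Nonempty) (hP : ∀ a w, 0 ≤ P a w)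
    (hPsum : ∀ a, ∑ w ∈ θ a, P a w = 1) (a : A) (n k : ℕ) :
    Hvec θ P (n + k) a ≤ Hvec θ P k a +
        ∑ v ∈ realsIter θ k [a], iterProb θ P k [a] v * Hword θ P n v ∧
      (Hvec θ P (n + k) a = Hvec θ P k a +
          ∑ v ∈ realsIter θ k [a], iterProb θ P k [a] v * Hword θ P n v ↔
        DeterminedBy θ P a k n) := by
  classical
  set S := realsIter θ k [a] with hSdef
  set W := realsIter θ (n + k) [a] with hWdef
  have hsub : ∀ v ∈ S, realsIter θ n v ⊆ W := by
    intro v hv w hw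
    have : w ∈ realsIter θ (k + n) [a] := mem_realsIter_comp hv hw
    rwa [show k + n = n + k by omega] at this
  have hCK : ∀ w, iterProb θ P (n + k) [a] w = ∑ v ∈ S, iterProb θ P k [a] v * iterProb θ P n v w := by
    intro w
    have := iterProb_CK (θ := θ) (P := P) k n [a] w
    rwa [show k + n = n + k by omega] at this
  have hq1 : ∀ v ∈ S, ∑ w ∈ W, iterProb θ P n v w = 1 := by
    intro v hv
    rw [← Finset.sum_subset (hsub v hv) (fun w _ hw => iterProb_eq_zero hw)]
    exact iterProb_sum_one hθ hPsum n v
  have hqH : ∀ v ∈ S, ∑ w ∈ W, Real.negMulLog (iterProb θ P n v w) = Hword θ P n v := by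
    intro v hv
    rw [← Finset.sum_subset (hsub v hv)
      (fun w _ hw => by rw [iterProb_eq_zero hw, Real.negMulLog_zero])]
    rfl
  have hJ : ∑ v ∈ S, ∑ w ∈ W, Real.negMulLog (iterProb θ P k [a] v * iterProb θ P n v w)
      = Hvec θ P k a + ∑ v ∈ S, iterProb θ P k [a] v * Hword θ P n v := by
    have hper : ∀ v ∈ S, ∑ w ∈ W, Real.negMulLog (iterProb θ P k [a] v * iterProb θ P n v w)
        = Real.negMulLog (iterProb θ P k [a] v) + iterProb θ P k [a] v * Hword θ P n v := by
      intro v hv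
      calc ∑ w ∈ W, Real.negMulLog (iterProb θ P k [a] v * iterProb θ P n v w)
          = ∑ w ∈ W, (iterProb θ P n v w * Real.negMulLog (iterProb θ P k [a] v) + iterProb θ P k [a] v * Real.negMulLog (iterProb θ P n v w)) :=
            Finset.sum_congr rfl fun w _ => Real.negMulLog_mul _ _
        _ = (∑ w ∈ W, iterProb θ P n v w) * Real.negMulLog (iterProb θ P k [a] v)
              + iterProb θ P k [a] v * ∑ w ∈ W, Real.negMulLog (iterProb θ P n v w) := by
            rw [Finset.sum_add_distrib, ← Finset.sum_mul, ← Finset.mul_sum]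
        _ = Real.negMulLog (iterProb θ P k [a] v) + iterProb θ P k [a] v * Hword θ P n v := by
            rw [hq1 v hv, hqH v hv, one_mul]
    rw [Finset.sum_congr rfl hper, Finset.sum_add_distrib]
    rfl
  have hnn : ∀ w ∈ W, ∀ v ∈ S, 0 ≤ iterProb θ P k [a] v * iterProb θ P n v w := fun w _ v _ =>
    mul_nonneg (iterProb_nonneg hP k [a] v) (iterProb_nonneg hP n v w)
  have hH : Hvec θ P (n + k) a = ∑ w ∈ W, Real.negMulLog (∑ v ∈ S, iterProb θ P k [a] v * iterProb θ P n v w) := by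
    unfold Hvec
    exact Finset.sum_congr rfl fun w _ => by rw [hCK w]
  have hle : ∀ w ∈ W, Real.negMulLog (∑ v ∈ S, iterProb θ P k [a] v * iterProb θ P n v w)
      ≤ ∑ v ∈ S, Real.negMulLog (iterProb θ P k [a] v * iterProb θ P n v w) := fun w hw =>
    sum_negMulLog_le (hnn w hw)
  have hswap : ∑ w ∈ W, ∑ v ∈ S, Real.negMulLog (iterProb θ P k [a] v * iterProb θ P n v w)
      = ∑ v ∈ S, ∑ w ∈ W, Real.negMulLog (iterProb θ P k [a] v * iterProb θ P n v w) := Finset.sum_comm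
  constructor
  · rw [hH, ← hJ, ← hswap]
    exact Finset.sum_le_sum hle
  · rw [hH, ← hJ, ← hswap]
    rw [Finset.sum_eq_sum_iff_of_le hle]
    constructor
    · intro heq v₁ v₂ w hv₁ hv₂ h₁ h₂
      have hq₁ : 0 < iterProb θ P n v₁ w := by
        rcases mul_pos_iff.1 h₁ with ⟨_, h⟩ | ⟨h', _⟩
        · exact h
        · exact absurd (iterProb_nonneg hP k [a] v₁) (not_le.2 h')
      have hwW : w ∈ W := by
        refine hsub v₁ hv₁ ?_
        by_contra hc
        rw [iterProb_eq_zero hc] at hq₁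
        exact lt_irrefl 0 hq₁
      have := (sum_negMulLog_eq_iff (hnn w hwW)).1 (heq w hwW)
      exact this v₁ hv₁ v₂ hv₂ h₁ h₂
    · intro hdet w hw
      refine (sum_negMulLog_eq_iff (hnn w hw)).2 fun v₁ hv₁ v₂ hv₂ h₁ h₂ => ?_
      exact hdet v₁ v₂ w hv₁ hv₂ h₁ h₂
/-! ### Phase 7: merging combinatorics -/

/-- Two distinct level-`m` realisations of a letter with a common descendant `j` levels on. -/
def Mg (θ : A → Finset (List A)) (m j : ℕ) : Prop :=
  ∃ (a : A) (u v w : List A), u ∈ realsIter θ m [a] ∧ v ∈ realsIter θ m [a] ∧ u ≠ v ∧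
    w ∈ realsIter θ j u ∧ w ∈ realsIter θ j v

lemma substM_ne_zero_of_occ {b e : A} (h : substM θ P b e ≠ 0) : ∃ s ∈ θ e, b ∈ s := by
  rw [substM_apply] at h
  rcases Finset.exists_ne_zero_of_sum_ne_zero h with ⟨s, hs, hval⟩
  refine ⟨s, hs, ?_⟩
  have : s.count b ≠ 0 := fun hc => hval (by rw [hc]; norm_num)
  exact List.count_pos_iff.1 (Nat.pos_of_ne_zero this)

lemma exists_occ (hθ : ∀ a, (θ a).Nonempty) (hne : ∀ a, ∀ w ∈ θ a, w ≠ [])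
    (hprim : IsPrimitive θ P) : ∀ b : A, ∃ c : A, ∃ s ∈ θ c, b ∈ s := by
  intro b
  rcases hprim with ⟨k₀, hk₀⟩
  rcases Nat.eq_zero_or_pos k₀ with hz | hpos
  · -- all letters are equal
    subst hz
    have hsub : ∀ i j : A, i = j := by
      intro i j
      by_contra hij
      have := hk₀ i j
      rw [pow_zero, Matrix.one_apply, if_neg hij] at this
      exact lt_irrefl 0 this
    rcases hθ b with ⟨s, hs⟩
    refine ⟨b, s, hs, ?_⟩
    rcases List.exists_mem_of_ne_nil s (hne b s hs) with ⟨x, hx⟩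
    rwa [hsub x b] at hx
  · have hk : substM θ P ^ k₀ = substM θ P * substM θ P ^ (k₀ - 1) := by
      rw [← pow_succ']
      congr 1
      omega
    by_contra hc
    push_neg at hc
    have hrow : ∀ e, substM θ P b e = 0 := by
      intro e
      by_contra h0
      rcases substM_ne_zero_of_occ h0 with ⟨s, hs, hbs⟩
      exact (hc e s hs) hbs
    have := hk₀ b b
    rw [hk, Matrix.mul_apply] at this
    rw [Finset.sum_eq_zero (fun e _ => by rw [hrow e, zero_mul])] at this
    exact lt_irrefl 0 this

lemma Mg_succ_right (hθ : ∀ a, (θ a).Nonempty) {m j : ℕ} (h : Mg θ m j) :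
    Mg θ m (j + 1) := by
  rcases h with ⟨a, u, v, w, hu, hv, huv, hwu, hwv⟩
  rcases reals_nonempty hθ w with ⟨w', hw'⟩
  have hw'1 : w' ∈ realsIter θ 1 w := mem_realsIter_one.2 hw'
  exact ⟨a, u, v, w', hu, hv, huv, mem_realsIter_comp hwu hw'1,
    mem_realsIter_comp hwv hw'1⟩

lemma Mg_mono_right (hθ : ∀ a, (θ a).Nonempty) {m j : ℕ} (h : Mg θ m j) :
    ∀ j', j ≤ j' → Mg θ m j' := by
  intro j' hj
  induction j' , hj using Nat.le_induction with
  | base => exact h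
  | succ j' _ ih => exact Mg_succ_right hθ ih

lemma Mg_succ_left (hθ : ∀ a, (θ a).Nonempty)
    (hocc : ∀ b : A, ∃ c : A, ∃ s ∈ θ c, b ∈ s) {m j : ℕ} (h : Mg θ m j) :
    Mg θ (m + 1) j := by
  rcases h with ⟨a, u, v, w, hu, hv, huv, hwu, hwv⟩
  rcases hocc a with ⟨c, s, hs, has⟩
  rcases List.append_of_mem has with ⟨s₁, s₂, rfl⟩
  rcases realsIter_nonempty hθ m s₁ with ⟨X, hX⟩
  rcases realsIter_nonempty hθ m s₂ with ⟨Y, hY⟩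
  rcases realsIter_nonempty hθ j X with ⟨WX, hWX⟩
  rcases realsIter_nonempty hθ j Y with ⟨WY, hWY⟩
  have hcons : ∀ z, z ∈ realsIter θ m (a :: s₂) ↔
      ∃ zu ∈ realsIter θ m [a], ∃ zY ∈ realsIter θ m s₂, z = zu ++ zY :=
    fun z => mem_realsIter_cons
  have hUmem : ∀ {z}, z ∈ realsIter θ m [a] →
      X ++ (z ++ Y) ∈ realsIter θ (m + 1) [c] := by
    intro z hz
    have h1 : z ++ Y ∈ realsIter θ m (a :: s₂) := hcons _ |>.2 ⟨z, hz, Y, hY, rfl⟩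
    have h2 : X ++ (z ++ Y) ∈ realsIter θ m (s₁ ++ a :: s₂) :=
      mem_realsIter_append.2 ⟨X, hX, z ++ Y, h1, rfl⟩
    have h3 : s₁ ++ a :: s₂ ∈ realsIter θ 1 [c] :=
      mem_realsIter_one.2 (mem_reals_singleton.2 hs)
    have := mem_realsIter_comp h3 h2
    rwa [show 1 + m = m + 1 by omega] at this
  have hWmem : ∀ {z}, w ∈ realsIter θ j z →
      WX ++ (w ++ WY) ∈ realsIter θ j (X ++ (z ++ Y)) := by
    intro z hz
    refine mem_realsIter_append.2 ⟨WX, hWX, w ++ WY, ?_, rfl⟩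
    exact mem_realsIter_append.2 ⟨w, hz, WY, hWY, rfl⟩
  refine ⟨c, X ++ (u ++ Y), X ++ (v ++ Y), WX ++ (w ++ WY), hUmem hu, hUmem hv, ?_,
    hWmem hwu, hWmem hwv⟩
  intro hc'
  exact huv (List.append_cancel_right (List.append_cancel_left hc'))

lemma Mg_mono_left (hθ : ∀ a, (θ a).Nonempty)
    (hocc : ∀ b : A, ∃ c : A, ∃ s ∈ θ c, b ∈ s) {m j : ℕ} (h : Mg θ m j) :
    ∀ m', m ≤ m' → Mg θ m' j := by
  intro m' hm
  induction m' , hm using Nat.le_induction with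
  | base => exact h
  | succ m' _ ih => exact Mg_succ_left hθ hocc ih

lemma Mg_shift {m j : ℕ} (h : Mg θ m (j + 1)) : Mg θ (m + 1) j ∨ Mg θ m 1 := by
  rcases h with ⟨a, u, v, w, hu, hv, huv, hwu, hwv⟩
  have h1 : ∀ {z}, w ∈ realsIter θ (j + 1) z →
      ∃ z' ∈ realsIter θ 1 z, w ∈ realsIter θ j z' := by
    intro z hz
    have : w ∈ realsIter θ (1 + j) z := by rwa [show 1 + j = j + 1 by omega]
    exact mem_realsIter_add.1 this
  rcases h1 hwu with ⟨u', hu', hwu'⟩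
  rcases h1 hwv with ⟨v', hv', hwv'⟩
  by_cases hne : u' = v'
  · subst hne
    exact Or.inr ⟨a, u, v, u', hu, hv, huv, hu', hv'⟩
  · refine Or.inl ⟨a, u', v', w, ?_, ?_, hne, hwu', hwv'⟩
    · have := mem_realsIter_comp hu hu'
      rwa [show m + 1 = m + 1 from rfl] at this
    · exact mem_realsIter_comp hv hv'

lemma forall₂_trans_mem {m j : ℕ} {p : List A} {ws Ws : List (List A)}
    (h₁ : List.Forall₂ (fun c y => y ∈ realsIter θ m [c]) p ws)
    (h₂ : List.Forall₂ (fun x y => y ∈ realsIter θ j x) ws Ws) :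
    List.Forall₂ (fun c y => y ∈ realsIter θ (m + j) [c]) p Ws := by
  rcases List.forall₂_iff_get.1 h₁ with ⟨l₁, g₁⟩
  rcases List.forall₂_iff_get.1 h₂ with ⟨l₂, g₂⟩
  refine List.forall₂_iff_get.2 ⟨l₁.trans l₂, fun i hh1 hh2 => ?_⟩
  exact mem_realsIter_comp (g₁ i hh1 (by omega)) (g₂ i (by omega) hh2)

lemma Mg_unshift (hU : UniqueRealisationPaths θ) {m j : ℕ} (h : Mg θ (m + 1) j) :
    Mg θ m (j + 1) ∨ Mg θ 1 j := by
  rcases h with ⟨a, u, v, w, hu, hv, huv, hwu, hwv⟩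
  rcases mem_realsIter_add.1 hu with ⟨pu, hpu, hu1⟩
  rcases mem_realsIter_add.1 hv with ⟨pv, hpv, hv1⟩
  by_cases hp : pu = pv
  · subst hp
    right
    -- decompose u and v letterwise over pu
    have hu1' : u ∈ reals θ pu := mem_realsIter_one.1 hu1
    have hv1' : v ∈ reals θ pu := mem_realsIter_one.1 hv1
    rcases mem_realsIter_letters.1 hu1 with ⟨wsu, hwsu, rfl⟩
    rcases mem_realsIter_letters.1 hv1 with ⟨wsv, hwsv, rfl⟩
    rcases mem_realsIter_flatten.1 hwu with ⟨Wu, hWu, rfl⟩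
    rcases mem_realsIter_flatten.1 hwv with ⟨Wv, hWv, hflat⟩
    have hcompu : List.Forall₂ (fun c y => y ∈ realsIter θ (1 + j) [c]) pu Wu :=
      forall₂_trans_mem hwsu hWu
    have hcompv : List.Forall₂ (fun c y => y ∈ realsIter θ (1 + j) [c]) pu Wv :=
      forall₂_trans_mem hwsv hWv
    have hpL : Legal θ pu := legal_of_mem_realsIter hpu
    have hWeq : Wu = Wv := urp_flatten hU hpL (1 + j) hcompu hcompv hflat
    subst hWeq
    -- find a differing coordinate
    have hlu : pu.length = wsu.length := List.Forall₂.length_eq hwsu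
    have hlv : pu.length = wsv.length := List.Forall₂.length_eq hwsv
    have hlW : wsu.length = Wu.length := List.Forall₂.length_eq hWu
    have hwsne : wsu ≠ wsv := fun hc => huv (by rw [hc])
    have hex : ∃ (i : ℕ) (h₁ : i < wsu.length) (h₂ : i < wsv.length),
        wsu.get ⟨i, h₁⟩ ≠ wsv.get ⟨i, h₂⟩ := by
      by_contra hcon
      push_neg at hcon
      exact hwsne (List.ext_get (by omega) fun i h1 h2 => hcon i h1 h2)
    rcases hex with ⟨i, h₁, h₂, hgetne⟩
    rcases List.forall₂_iff_get.1 hwsu with ⟨_, gu⟩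
    rcases List.forall₂_iff_get.1 hwsv with ⟨_, gv⟩
    rcases List.forall₂_iff_get.1 hWu with ⟨_, gW⟩
    rcases List.forall₂_iff_get.1 hWv with ⟨_, gW'⟩
    refine ⟨pu.get ⟨i, by omega⟩, wsu.get ⟨i, h₁⟩, wsv.get ⟨i, h₂⟩, Wu.get ⟨i, by omega⟩,
      gu i (by omega) h₁, gv i (by omega) h₂, hgetne, gW i h₁ (by omega), ?_⟩
    exact gW' i h₂ (by omega)
  · left
    have hwpu : w ∈ realsIter θ (1 + j) pu := mem_realsIter_comp hu1 hwu
    have hwpv : w ∈ realsIter θ (1 + j) pv := mem_realsIter_comp hv1 hwv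
    rw [show 1 + j = j + 1 by omega] at hwpu hwpv
    exact ⟨a, pu, pv, w, hpu, hpv, hp, hwpu, hwpv⟩

lemma ladderC : ∀ (d m j : ℕ), Mg θ m (j + d) →
    Mg θ (m + d) j ∨ ∃ m', m' < m + d ∧ Mg θ m' 1 := by
  intro d
  induction d with
  | zero => intro m j h; exact Or.inl h
  | succ d ih =>
      intro m j h
      have h' : Mg θ m ((j + d) + 1) := h
      rcases Mg_shift h' with h2 | h2
      · rcases ih (m + 1) j h2 with h3 | ⟨m', hm', h3⟩
        · left
          rwa [show m + 1 + d = m + (d + 1) by omega] at h3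
        · exact Or.inr ⟨m', by omega, h3⟩
      · exact Or.inr ⟨m, by omega, h2⟩

lemma ladderD (hU : UniqueRealisationPaths θ) : ∀ (d m j : ℕ), Mg θ (m + d) j →
    Mg θ m (j + d) ∨ ∃ j', j' < j + d ∧ Mg θ 1 j' := by
  intro d
  induction d with
  | zero => intro m j h; exact Or.inl h
  | succ d ih =>
      intro m j h
      have h' : Mg θ ((m + d) + 1) j := h
      rcases Mg_unshift hU h' with h2 | h2
      · rcases ih m (j + 1) h2 with h3 | ⟨j', hj', h3⟩
        · left
          rwa [show j + 1 + d = j + (d + 1) by omega] at h3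
        · exact Or.inr ⟨j', by omega, h3⟩
      · exact Or.inr ⟨j, by omega, h2⟩

lemma Mg_symm (hθ : ∀ a, (θ a).Nonempty)
    (hocc : ∀ b : A, ∃ c : A, ∃ s ∈ θ c, b ∈ s) (hU : UniqueRealisationPaths θ)
    {n k : ℕ} (hn : 1 ≤ n) (hk : 1 ≤ k) (h : Mg θ n k) : Mg θ k n := by
  rcases lt_trichotomy n k with hlt | heq | hgt
  · have h' : Mg θ n (n + (k - n)) := by rwa [show n + (k - n) = k by omega]
    rcases ladderC (k - n) n n h' with h2 | ⟨m', hm', h2⟩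
    · rwa [show n + (k - n) = k by omega] at h2
    · have hm'k : m' ≤ k := by omega
      exact Mg_mono_right hθ (Mg_mono_left hθ hocc h2 k hm'k) n hn
  · subst heq; exact h
  · have h' : Mg θ (k + (n - k)) k := by rwa [show k + (n - k) = n by omega]
    rcases ladderD hU (n - k) k k h' with h2 | ⟨j', hj', h2⟩
    · rwa [show k + (n - k) = n by omega] at h2
    · have hj'n : j' ≤ n := by omega
      exact Mg_mono_right hθ (Mg_mono_left hθ hocc h2 k hk) n hj'n

lemma det_iff_not_Mg (hP : ∀ a w, 0 ≤ P a w) (hPpos : ∀ a, ∀ w ∈ θ a, 0 < P a w)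
    {m j : ℕ} : (∀ a, DeterminedBy θ P a m j) ↔ ¬ Mg θ m j := by
  constructor
  · rintro hdet ⟨a, u, v, w, hu, hv, huv, hwu, hwv⟩
    exact huv (hdet a u v w hu hv
      (mul_pos (iterProb_pos hP hPpos hu) (iterProb_pos hP hPpos hwu))
      (mul_pos (iterProb_pos hP hPpos hv) (iterProb_pos hP hPpos hwv)))
  · intro hnm a v₁ v₂ w h₁ h₂ hp₁ hp₂
    by_contra hne
    have hq₁ : w ∈ realsIter θ j v₁ := by
      by_contra hc
      rw [iterProb_eq_zero hc, mul_zero] at hp₁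
      exact lt_irrefl 0 hp₁
    have hq₂ : w ∈ realsIter θ j v₂ := by
      by_contra hc
      rw [iterProb_eq_zero hc, mul_zero] at hp₂
      exact lt_irrefl 0 hp₂
    exact hnm ⟨a, v₁, v₂, w, h₁, h₂, hne, hq₁, hq₂⟩

/-! ### Final assembly -/

theorem statement9 {A : Type*} [Fintype A] [DecidableEq A]
    (θ : A → Finset (List A)) (P : A → List A → ℝ) (lam : ℝ) (R : A → ℝ)
    (hRS : IsRandomSubstitution θ P) (hprim : IsPrimitive θ P) (hlam : 1 < lam)
    (hRpos : ∀ a, 0 < R a) (hRsum : ∑ a, R a = 1)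
    (hEig : (substM θ P).mulVec R = lam • R) :
    ∀ n k : ℕ, 1 ≤ n → 1 ≤ k →
      (∀ a : A, Hvec θ P (n + k) a ≤
          (∑ b, Hvec θ P n b * (substM θ P ^ k) b a) + Hvec θ P k a) ∧
        HdotR θ P R (n + k) ≤ lam ^ k * HdotR θ P R n + HdotR θ P R k ∧
        (UniqueRealisationPaths θ →
          ((∀ a : A, Hvec θ P (n + k) a =
              (∑ b, Hvec θ P n b * (substM θ P ^ k) b a) + Hvec θ P k a) ↔
            ∀ a : A, DeterminedBy θ P a n k)) := by
  obtain ⟨hθ, hne, hPpos, hP0, hPsum⟩ := hRS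
  have hP : ∀ a w, 0 ≤ P a w := by
    intro a w
    by_cases h : w ∈ θ a
    · exact (hPpos a w h).le
    · exact (hP0 a w h).ge
  intro n k hn hk
  -- the key algebraic identity
  have halg : ∀ a : A, ∑ v ∈ realsIter θ k [a],
      iterProb θ P k [a] v * (∑ b, ((v.count b : ℝ)) * Hvec θ P n b)
        = ∑ b, Hvec θ P n b * (substM θ P ^ k) b a := by
    intro a
    calc ∑ v ∈ realsIter θ k [a],
          iterProb θ P k [a] v * (∑ b, ((v.count b : ℝ)) * Hvec θ P n b)
        = ∑ v ∈ realsIter θ k [a], ∑ b,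
            Hvec θ P n b * (iterProb θ P k [a] v * (v.count b : ℝ)) := by
          refine Finset.sum_congr rfl fun v _ => ?_
          rw [Finset.mul_sum]
          exact Finset.sum_congr rfl fun b _ => by ring
      _ = ∑ b, ∑ v ∈ realsIter θ k [a],
            Hvec θ P n b * (iterProb θ P k [a] v * (v.count b : ℝ)) := Finset.sum_comm
      _ = ∑ b, Hvec θ P n b * (substM θ P ^ k) b a := by
          refine Finset.sum_congr rfl fun b _ => ?_
          rw [← Finset.mul_sum, substM_pow_apply hθ hP hPsum k b a]
  have part1 : ∀ a : A, Hvec θ P (n + k) a ≤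
      (∑ b, Hvec θ P n b * (substM θ P ^ k) b a) + Hvec θ P k a := by
    intro a
    have h1 := (chain_rule hθ hP hPsum a n k).1
    have h2 : ∑ v ∈ realsIter θ k [a], iterProb θ P k [a] v * Hword θ P n v ≤
        ∑ v ∈ realsIter θ k [a],
          iterProb θ P k [a] v * (∑ b, ((v.count b : ℝ)) * Hvec θ P n b) :=
      Finset.sum_le_sum fun v _ => mul_le_mul_of_nonneg_left
        (Hword_le_sum hθ hP hPsum n v) (iterProb_nonneg hP k [a] v)
    rw [halg a] at h2
    linarith
  refine ⟨part1, ?_, ?_⟩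
  · -- dot product bound
    have hmv : ∀ b : A, ∑ a, (substM θ P ^ k) b a * R a = lam ^ k * R b := by
      intro b
      have := congrFun (pow_mulVec (θ := θ) (P := P) hEig k) b
      rw [Pi.smul_apply, smul_eq_mul] at this
      rw [← this]
      rfl
    calc HdotR θ P R (n + k)
        ≤ ∑ a, ((∑ b, Hvec θ P n b * (substM θ P ^ k) b a) + Hvec θ P k a) * R a :=
          Finset.sum_le_sum fun a _ => mul_le_mul_of_nonneg_right (part1 a) (hRpos a).le
      _ = (∑ a, ∑ b, Hvec θ P n b * (substM θ P ^ k) b a * R a)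
            + ∑ a, Hvec θ P k a * R a := by
          rw [← Finset.sum_add_distrib]
          refine Finset.sum_congr rfl fun a _ => ?_
          rw [add_mul, Finset.sum_mul]
      _ = lam ^ k * HdotR θ P R n + HdotR θ P R k := by
          have : (∑ a, ∑ b, Hvec θ P n b * (substM θ P ^ k) b a * R a)
              = lam ^ k * HdotR θ P R n := by
            rw [Finset.sum_comm]
            unfold HdotR
            rw [Finset.mul_sum]
            refine Finset.sum_congr rfl fun b _ => ?_
            calc ∑ a, Hvec θ P n b * (substM θ P ^ k) b a * R a
                = Hvec θ P n b * ∑ a, (substM θ P ^ k) b a * R a := by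
                  rw [Finset.mul_sum]
                  exact Finset.sum_congr rfl fun a _ => by ring
              _ = lam ^ k * (Hvec θ P n b * R b) := by rw [hmv b]; ring
          rw [this]
          rfl
  · -- equality characterisation
    intro hU
    have hocc := exists_occ hθ hne hprim
    have hbound : ∀ a : A, (∑ b, Hvec θ P n b * (substM θ P ^ k) b a) + Hvec θ P k a
        = Hvec θ P k a + ∑ v ∈ realsIter θ k [a], iterProb θ P k [a] v * Hword θ P n v := by
      intro a
      rw [← halg a, add_comm]
      congr 1
      refine Finset.sum_congr rfl fun v hv => ?_
      rw [Hword_eq_sum hθ hP hPsum hU n v (legal_of_mem_realsIter hv)]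
    have hiff1 : (∀ a : A, Hvec θ P (n + k) a =
        (∑ b, Hvec θ P n b * (substM θ P ^ k) b a) + Hvec θ P k a) ↔
          ∀ a : A, DeterminedBy θ P a k n := by
      constructor
      · intro h a
        exact ((chain_rule hθ hP hPsum a n k).2).1 (by rw [← hbound a]; exact h a)
      · intro h a
        rw [hbound a]
        exact ((chain_rule hθ hP hPsum a n k).2).2 (h a)
    rw [hiff1, det_iff_not_Mg hP hPpos, det_iff_not_Mg hP hPpos]
    constructor
    · intro h hm
      exact h (Mg_symm hθ hocc hU hn hk hm)
    · intro h hm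
      exact h (Mg_symm hθ hocc hU hk hn hm)

end RandomSubstitutionTheory
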